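/- arXiv:1804.03808 — 8 statements merged into one kernel-verified Lean document; each statement's English description precedes it below -/
import Mathlib

section
/- Let u ≥ 3 be an integer with u ≡ 3 (mod 10) or u ≡ 7 (mod 10). Suppose that at least one of the following holds: (1) v_2(u²-1) is even; (2) there exists an odd prime p with p ≡ 2, 3, or 4 (mod 5) such that v_p(u+1) is odd or v_p(u-1) is odd. Then there is no ((u²+1)/2, (u-1)²/4, (u-1)(u-3)/8) cyclic difference set in ℤ/((u²+1)/2)ℤ, and consequently there is no binary sequence of period (u²+1)/2 with all nontrivial autocorrelation values equal to 1. -/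
/-- A binary sequence of period `n`: values in `{-1, 1}` and `a (i + n) = a i`. -/
def IsBinarySeq (n : ℕ) (a : ℤ → ℤ) : Prop :=
  (∀ i : ℤ, a i = -1 ∨ a i = 1) ∧ ∀ i : ℤ, a (i + n) = a i

/-- The autocorrelation of `a` (period `n`) at shift `t`. -/
def autocorr (n : ℕ) (a : ℤ → ℤ) (t : ℤ) : ℤ :=
  ∑ i ∈ Finset.range n, a i * a (i + t)

/-- All nontrivial autocorrelation values of `a` are equal to `d`. -/
def HasConstAutocorr (n : ℕ) (a : ℤ → ℤ) (d : ℤ) : Prop :=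
  ∀ t : ℤ, 1 ≤ t → t ≤ (n : ℤ) - 1 → autocorr n a t = d

/-- `D` is an `(n, k, λ)` cyclic difference set in `ℤ/nℤ`. -/
def IsCDS (n k lam : ℕ) (D : Finset (ZMod n)) : Prop :=
  D.card = k ∧ ∀ g : ZMod n, g ≠ 0 →
    ((D ×ˢ D).filter (fun q => q.1 - q.2 = g)).card = lam

/-- `a` is semiprimitive modulo `b`: some power of `a` is `≡ -1 (mod b)`. -/
def Semiprimitive (a : ℤ) (b : ℕ) : Prop :=
  ∃ c : ℕ, 0 < c ∧ Int.ModEq (b : ℤ) (a ^ c) (-1)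

/-- `m` is a quadratic non-residue modulo `e`. -/
def IsQNR (m : ℤ) (e : ℕ) : Prop :=
  ¬ ((e : ℤ) ∣ m) ∧ ¬ ∃ x : ℤ, Int.ModEq (e : ℤ) m (x ^ 2)



open Polynomial

noncomputable section

local instance fact5 : Fact (Nat.Prime 5) := ⟨by norm_num⟩

abbrev Rc : Type := AdjoinRoot (cyclotomic 5 ℤ)

namespace CDSProof

def r : Rc := AdjoinRoot.root _

lemma cyc5_prime : Prime (cyclotomic 5 ℤ) :=
  (cyclotomic.irreducible (by norm_num)).prime

instance : IsDomain Rc := AdjoinRoot.isDomain_of_prime cyc5_prime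

lemma hsum : (1:Rc) + r + r^2 + r^3 + r^4 = 0 := by
  have h : eval₂ (AdjoinRoot.of (cyclotomic 5 ℤ)) r (∑ i ∈ Finset.range 5, X^i) = 0 := by
    rw [← cyclotomic_prime ℤ 5]; exact AdjoinRoot.eval₂_root _
  rw [Polynomial.eval₂_finset_sum] at h
  simp only [eval₂_X_pow] at h
  simp only [Finset.sum_range_succ, Finset.sum_range_zero] at h
  rw [← h]; ring

lemma r5 : r^5 = 1 := by linear_combination (r - 1) * hsum

lemma pow_mod (i : ℕ) : r ^ i = r ^ (i % 5) := by
  conv_lhs => rw [← Nat.div_add_mod i 5]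
  rw [pow_add, pow_mul, r5, one_pow, one_mul]

def tau : Rc →+* Rc := AdjoinRoot.lift (AdjoinRoot.of _) (r^4) (by
  have h : eval₂ (AdjoinRoot.of (cyclotomic 5 ℤ)) (r^4) (∑ i ∈ Finset.range 5, X^i)
      = eval₂ (AdjoinRoot.of (cyclotomic 5 ℤ)) (r^4) (cyclotomic 5 ℤ) := by
    rw [← cyclotomic_prime ℤ 5]
  rw [← h, Polynomial.eval₂_finset_sum]
  simp only [eval₂_X_pow, ← pow_mul]
  simp only [Finset.sum_range_succ, Finset.sum_range_zero]
  rw [pow_mod (4*1), pow_mod (4*2), pow_mod (4*3), pow_mod (4*4)]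
  norm_num
  linear_combination hsum)

lemma tau_root : tau r = r ^ 4 := AdjoinRoot.lift_root _

section PrimeLemmas

variable {p : ℕ}

lemma mk_C_eq (z : ℤ) : AdjoinRoot.mk (cyclotomic 5 ℤ) (C z) = (z : Rc) := by
  have h : (C z : ℤ[X]) = (z : ℤ[X]) := by simp
  rw [h, map_intCast]

lemma deg_cyc5 (hp : p.Prime) : (cyclotomic 5 (ZMod p)).degree = 4 := by
  haveI : Fact p.Prime := ⟨hp⟩
  rw [degree_cyclotomic]
  norm_num [Nat.totient_prime (by norm_num : Nat.Prime 5)]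

/-- if the image of a polynomial in `(ZMod p)[X]` is zero, then `p` divides `mk Q`. -/
lemma dvd_of_map_eq_zero (hp : p.Prime) (Q : ℤ[X])
    (h : Q.map (Int.castRingHom (ZMod p)) = 0) :
    (p : Rc) ∣ AdjoinRoot.mk (cyclotomic 5 ℤ) Q := by
  have hc : (C (p:ℤ)) ∣ Q := by
    rw [Polynomial.C_dvd_iff_dvd_coeff]
    intro i
    have : (Q.coeff i : ZMod p) = 0 := by
      have := congrArg (fun q => Polynomial.coeff q i) h
      simpa [Polynomial.coeff_map] using this
    exact_mod_cast (ZMod.intCast_zmod_eq_zero_iff_dvd _ p).mp this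
  obtain ⟨G, rfl⟩ := hc
  refine ⟨AdjoinRoot.mk _ G, ?_⟩
  rw [map_mul, mk_C_eq]
  push_cast
  ring

lemma p_ne_zero_Rc (hp : p.Prime) : (p : Rc) ≠ 0 := by
  intro h0
  have h1 : AdjoinRoot.mk (cyclotomic 5 ℤ) (C (p:ℤ)) = 0 := by
    rw [mk_C_eq]; exact_mod_cast h0
  rw [AdjoinRoot.mk_eq_zero] at h1
  have hC0 : (C ((p:ℕ):ℤ)) ≠ 0 := by
    simp [Polynomial.C_eq_zero, hp.ne_zero]
  have hd := Polynomial.degree_le_of_dvd h1 hC0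
  rw [Polynomial.degree_C (by exact_mod_cast hp.ne_zero), degree_cyclotomic] at hd
  norm_num [Nat.totient_prime (by norm_num : Nat.Prime 5)] at hd

lemma int_dvd_reflect (hp : p.Prime) (z : ℤ) (h : (p : Rc) ∣ (z : Rc)) : (p:ℤ) ∣ z := by
  haveI : Fact p.Prime := ⟨hp⟩
  obtain ⟨y, hy⟩ := h
  obtain ⟨Y, rfl⟩ := AdjoinRoot.mk_surjective y
  have hz : AdjoinRoot.mk (cyclotomic 5 ℤ) ((z : ℤ[X]) - ((p:ℕ) : ℤ[X]) * Y) = 0 := by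
    rw [map_sub, map_mul, map_intCast, map_natCast, ← hy]; ring
  rw [AdjoinRoot.mk_eq_zero] at hz
  have hmap := Polynomial.map_dvd (Int.castRingHom (ZMod p)) hz
  rw [Polynomial.map_cyclotomic, Polynomial.map_sub, Polynomial.map_mul,
    Polynomial.map_intCast, Polynomial.map_natCast] at hmap
  rw [show (((p:ℕ)) : (ZMod p)[X]) = 0 by
    rw [← map_natCast (Polynomial.C : ZMod p →+* (ZMod p)[X]) p, ZMod.natCast_self, map_zero]] at hmap
  rw [zero_mul, sub_zero] at hmap
  rw [show ((z:ℤ) : ((ZMod p)[X])) = C ((z : ZMod p)) by rw [Polynomial.C_eq_intCast]] at hmap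
  by_contra hnd
  have hz0 : ((z : ZMod p)) ≠ 0 := fun h0 =>
    hnd ((ZMod.intCast_zmod_eq_zero_iff_dvd _ p).mp h0)
  have hC0 : (C ((z : ZMod p))) ≠ 0 := Polynomial.C_ne_zero.mpr hz0
  have hd := Polynomial.degree_le_of_dvd hmap hC0
  rw [deg_cyc5 hp, Polynomial.degree_C hz0] at hd
  exact absurd hd (by norm_num)

lemma radical_p (hp : p.Prime) (hp5 : p ≠ 5) (x : Rc) (N : ℕ) (hN : N ≠ 0)
    (h : (p : Rc) ∣ x ^ N) : (p : Rc) ∣ x := by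
  haveI : Fact p.Prime := ⟨hp⟩
  obtain ⟨Z, rfl⟩ := AdjoinRoot.mk_surjective x
  obtain ⟨y, hy⟩ := h
  obtain ⟨Y, rfl⟩ := AdjoinRoot.mk_surjective y
  have hz : AdjoinRoot.mk (cyclotomic 5 ℤ) (Z^N - ((p:ℕ) : ℤ[X]) * Y) = 0 := by
    rw [map_sub, map_mul, map_pow, map_natCast, ← hy]; ring
  rw [AdjoinRoot.mk_eq_zero] at hz
  have hmap := Polynomial.map_dvd (Int.castRingHom (ZMod p)) hz
  rw [Polynomial.map_cyclotomic, Polynomial.map_sub, Polynomial.map_mul,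
    Polynomial.map_natCast, Polynomial.map_pow] at hmap
  rw [show (((p:ℕ)) : (ZMod p)[X]) = 0 by
    rw [← map_natCast (Polynomial.C : ZMod p →+* (ZMod p)[X]) p, ZMod.natCast_self, map_zero]] at hmap
  rw [zero_mul, sub_zero] at hmap
  have hsf : Squarefree (cyclotomic 5 (ZMod p)) := by
    have h5 : ((5:ℕ) : ZMod p) ≠ 0 := by
      rw [Ne, ZMod.natCast_eq_zero_iff]
      exact fun hd => hp5 ((Nat.prime_dvd_prime_iff_eq hp (by norm_num)).mp hd)
    have hsep : Separable ((X : (ZMod p)[X])^5 - C 1) :=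
      Polynomial.separable_X_pow_sub_C 1 (by exact_mod_cast h5) one_ne_zero
    have h1 : Squarefree ((X : (ZMod p)[X])^5 - 1) := by
      simpa using hsep.squarefree
    exact h1.squarefree_of_dvd (by simpa using cyclotomic.dvd_X_pow_sub_one 5 (ZMod p))
  have hdvd : cyclotomic 5 (ZMod p) ∣ Z.map (Int.castRingHom (ZMod p)) :=
    (hsf.dvd_pow_iff_dvd hN).mp hmap
  obtain ⟨W, hW⟩ := hdvd
  obtain ⟨H, hH⟩ := Polynomial.map_surjective (Int.castRingHom (ZMod p))
    (ZMod.ringHom_surjective _) W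
  have step := dvd_of_map_eq_zero hp (Z - cyclotomic 5 ℤ * H) (by
    rw [Polynomial.map_sub, Polynomial.map_mul, Polynomial.map_cyclotomic, hH, ← hW]
    ring)
  rw [map_sub, map_mul] at step
  rw [show AdjoinRoot.mk (cyclotomic 5 ℤ) (cyclotomic 5 ℤ) = 0 by
    rw [AdjoinRoot.mk_eq_zero]] at step
  rw [zero_mul, sub_zero] at step
  exact step

end PrimeLemmas
section Frob

variable {p : ℕ}

lemma charQ (hp : p.Prime) :
    CharP (Rc ⧸ (Ideal.span {(p:Rc)})) p := by
  constructor
  intro q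
  constructor
  · intro hq
    have : ((q:ℕ):Rc) ∈ Ideal.span {(p:Rc)} := by
      rw [← Ideal.Quotient.eq_zero_iff_mem]
      exact_mod_cast hq
    rw [Ideal.mem_span_singleton] at this
    have h2 : (p:ℤ) ∣ (q:ℤ) := by
      apply int_dvd_reflect hp
      exact_mod_cast this
    exact_mod_cast h2
  · intro hq
    obtain ⟨c, rfl⟩ := hq
    have h0 : ((p:ℕ) : (Rc ⧸ (Ideal.span {(p:Rc)}))) = 0 := by
      have hmem : ((p:ℕ):Rc) ∈ Ideal.span {(p:Rc)} := Ideal.mem_span_singleton.mpr dvd_rfl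
      rw [← Ideal.Quotient.eq_zero_iff_mem] at hmem
      simpa using hmem
    push_cast
    rw [h0, zero_mul]

lemma tau_frob (hp : p.Prime) {j : ℕ} (hj : p ^ j % 5 = 4) (x : Rc) :
    (p : Rc) ∣ tau x - x ^ (p ^ j) := by
  haveI : Fact p.Prime := ⟨hp⟩
  set Q := Rc ⧸ (Ideal.span {(p:Rc)}) with hQ
  haveI : CharP Q p := charQ hp
  haveI : ExpChar Q p := ExpChar.prime hp
  set π : Rc →+* Q := Ideal.Quotient.mk _ with hπ
  have key : π.comp tau = (iterateFrobenius Q p j).comp π := by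
    have h2 : (π.comp tau).comp (AdjoinRoot.mk (cyclotomic 5 ℤ))
        = ((iterateFrobenius Q p j).comp π).comp (AdjoinRoot.mk (cyclotomic 5 ℤ)) := by
      apply Polynomial.ringHom_ext
      · intro a
        have h3 : ∀ (f : ℤ[X] →+* Q), f (C a) = (a : Q) := by
          intro f
          rw [show (C a : ℤ[X]) = (a : ℤ[X]) by simp, map_intCast]
        rw [h3, h3]
      · simp only [RingHom.comp_apply, AdjoinRoot.mk_X]
        rw [show AdjoinRoot.root (cyclotomic 5 ℤ) = r from rfl]
        rw [tau_root, iterateFrobenius_def, ← map_pow]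
        congr 1
        rw [pow_mod (p^j), hj]
    refine RingHom.ext fun x => ?_
    obtain ⟨Z, rfl⟩ := AdjoinRoot.mk_surjective x
    exact RingHom.congr_fun h2 Z
  have : π (tau x - x ^ (p ^ j)) = 0 := by
    rw [map_sub, map_pow]
    have := RingHom.congr_fun key x
    simp only [RingHom.comp_apply] at this
    rw [this, iterateFrobenius_def]
    ring
  rw [Ideal.Quotient.eq_zero_iff_mem, Ideal.mem_span_singleton] at this
  exact this

lemma pdvd_of_dvd_mul_tau (hp : p.Prime) (hp5 : p ≠ 5) {j : ℕ} (hj : p ^ j % 5 = 4)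
    (x : Rc) (h : (p:Rc) ∣ x * tau x) : (p:Rc) ∣ x := by
  have h6 := tau_frob hp hj x
  have h7 : (p:Rc) ∣ x ^ (p^j + 1) := by
    have : x ^ (p^j+1) = x * tau x - x * (tau x - x ^ (p^j)) := by ring
    rw [this]
    exact dvd_sub h (Dvd.dvd.mul_left h6 x)
  exact radical_p hp hp5 x _ (Nat.succ_ne_zero _) h7

lemma core_even (hp : p.Prime) (hp5 : p ≠ 5) {j : ℕ} (hj : p ^ j % 5 = 4) :
    ∀ a : ℕ, ∀ x : Rc, ∀ w : ℤ, x * tau x = (p:Rc)^a * (w:Rc) → ¬ ((p:ℤ) ∣ w) → Even a := by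
  intro a
  induction a using Nat.strong_induction_on with
  | _ a ih =>
    intro x w heq hw
    match a with
    | 0 => exact Even.zero
    | 1 =>
      exfalso
      have hd : (p:Rc) ∣ x * tau x := by rw [heq]; exact ⟨(w:Rc), by ring⟩
      obtain ⟨x', rfl⟩ := pdvd_of_dvd_mul_tau hp hp5 hj x hd
      have hpn := p_ne_zero_Rc hp
      rw [map_mul, map_natCast] at heq
      have heq2 : (p:Rc) * ((p:Rc) * (x' * tau x')) = (p:Rc) * (w:Rc) := by
        linear_combination heq
      have heq3 : (p:Rc) * (x' * tau x') = (w:Rc) := mul_left_cancel₀ hpn heq2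
      exact hw (int_dvd_reflect hp w ⟨_, heq3.symm⟩)
    | (b+2) =>
      have hd : (p:Rc) ∣ x * tau x := by
        rw [heq]; exact ⟨(p:Rc)^(b+1) * (w:Rc), by ring⟩
      obtain ⟨x', rfl⟩ := pdvd_of_dvd_mul_tau hp hp5 hj x hd
      have hpn := p_ne_zero_Rc hp
      rw [map_mul, map_natCast] at heq
      have heq2 : (p:Rc)^2 * (x' * tau x') = (p:Rc)^2 * ((p:Rc)^b * (w:Rc)) := by
        linear_combination heq
      have heq3 : x' * tau x' = (p:Rc)^b * (w:Rc) :=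
        mul_left_cancel₀ (pow_ne_zero 2 hpn) heq2
      obtain ⟨c, hc⟩ := ih b (by omega) x' w heq3 hw
      exact ⟨c+1, by omega⟩

lemma no_tau_solution (hp : p.Prime) (hp5 : p % 5 = 2 ∨ p % 5 = 3 ∨ p % 5 = 4)
    (m : ℕ) (hm : m ≠ 0) (hodd : Odd (padicValNat p m)) (x : Rc) :
    x * tau x ≠ (m : Rc) := by
  intro heq
  have hpne5 : p ≠ 5 := by rintro rfl; omega
  -- choose j
  obtain ⟨j, hj⟩ : ∃ j : ℕ, p ^ j % 5 = 4 := by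
    rcases hp5 with h|h|h
    · exact ⟨2, by rw [Nat.pow_mod, h]⟩
    · exact ⟨2, by rw [Nat.pow_mod, h]⟩
    · exact ⟨1, by rw [Nat.pow_mod, h]⟩
  set a := padicValNat p m with ha
  have hfac : p ^ a * (m / p ^ a) = m := by
    rw [ha, ← Nat.factorization_def m hp]
    exact Nat.ordProj_mul_ordCompl_eq_self m p
  have hnd : ¬ (p ∣ (m / p ^ a)) := by
    rw [ha, ← Nat.factorization_def m hp]
    exact Nat.not_dvd_ordCompl hp hm
  have hcast : (m : Rc) = (p:Rc)^a * ((((m / p^a : ℕ) : ℤ)) : Rc) := by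
    conv_lhs => rw [← hfac]
    rw [Nat.cast_mul, Nat.cast_pow, Int.cast_natCast]
  have heq2 := heq.trans hcast
  have hev := core_even hp hpne5 hj a x _ heq2 (by exact_mod_cast hnd)
  rw [Nat.even_iff] at hev
  rw [Nat.odd_iff] at hodd
  omega

end Frob
section DS

def rho : ZMod 5 → Rc := fun t => r ^ t.val

lemma rho_add (s t : ZMod 5) : rho (s + t) = rho s * rho t := by
  unfold rho
  rw [← pow_add]
  rw [show (s + t).val = (s.val + t.val) % 5 from ZMod.val_add s t]
  exact (pow_mod _).symm

lemma rho_zero : rho 0 = 1 := by simp [rho, ZMod.val_zero]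

lemma tau_rho (t : ZMod 5) : tau (rho t) = rho (-t) := by
  unfold rho
  rw [map_pow, tau_root, ← pow_mul]
  have h1 : (-t) = (4 : ZMod 5) * t := by
    have : (4 : ZMod 5) = -1 := by decide
    rw [this]; ring
  rw [h1, pow_mod (4 * t.val)]
  congr 1

lemma sum_rho : (∑ t : ZMod 5, rho t) = 0 := by
  have h : (∑ t : ZMod 5, rho t) = ∑ i : Fin 5, r ^ (i : Fin 5).val := rfl
  rw [h, Fin.sum_univ_five]
  show r ^ 0 + r ^ 1 + r ^ 2 + r ^ 3 + r ^ 4 = 0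
  rw [pow_zero, pow_one]
  linear_combination hsum

lemma ds_eq (n k lam : ℕ) (hn : n ≠ 0) (h5 : (5:ℕ) ∣ n) (D : Finset (ZMod n))
    (hcard : D.card = k)
    (hlam : ∀ g : ZMod n, g ≠ 0 →
      ((D ×ˢ D).filter (fun q => q.1 - q.2 = g)).card = lam) :
    (∑ x ∈ D, rho (ZMod.castHom h5 (ZMod 5) x)) *
      tau (∑ x ∈ D, rho (ZMod.castHom h5 (ZMod 5) x)) = (k : Rc) - (lam : Rc) := by
  haveI : NeZero n := ⟨hn⟩
  set π : ZMod n →+* ZMod 5 := ZMod.castHom h5 (ZMod 5) with hπ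
  -- step 1 : expand the product as a sum over pairs
  have htau : tau (∑ x ∈ D, rho (π x)) = ∑ y ∈ D, rho (- π y) := by
    rw [map_sum]
    exact Finset.sum_congr rfl fun y _ => tau_rho (π y)
  rw [htau, Finset.sum_mul_sum]
  have hterm : ∀ x ∈ D, ∀ y ∈ D, rho (π x) * rho (- π y) = rho (π (x - y)) := by
    intro x _ y _
    rw [← rho_add, map_sub]
    ring_nf
  rw [Finset.sum_congr rfl (fun x hx => Finset.sum_congr rfl (fun y hy => hterm x hx y hy))]
  rw [← Finset.sum_product']
  -- step 2 : fiber the sum over the difference g = q.1 - q.2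
  rw [← Finset.sum_fiberwise (D ×ˢ D) (fun q => q.1 - q.2) (fun q => rho (π (q.1 - q.2)))]
  have hinner : ∀ g : ZMod n,
      (∑ q ∈ (D ×ˢ D).filter (fun q => q.1 - q.2 = g), rho (π (q.1 - q.2)))
        = ((D ×ˢ D).filter (fun q => q.1 - q.2 = g)).card • rho (π g) := by
    intro g
    rw [Finset.sum_congr rfl (fun q hq => by
      rw [(Finset.mem_filter.mp hq).2])]
    rw [Finset.sum_const]
  rw [Finset.sum_congr rfl fun g _ => hinner g]
  -- diagonal count
  have hdiag : ((D ×ˢ D).filter (fun q => q.1 - q.2 = (0 : ZMod n))).card = k := by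
    rw [← hcard]
    apply Finset.card_bij (fun q _ => q.1)
    · intro q hq
      exact (Finset.mem_product.mp (Finset.mem_filter.mp hq).1).1
    · intro q1 hq1 q2 hq2 he
      have e1 : q1.1 - q1.2 = 0 := (Finset.mem_filter.mp hq1).2
      have e2 : q2.1 - q2.2 = 0 := (Finset.mem_filter.mp hq2).2
      have : q1.2 = q2.2 := by
        have a1 : q1.1 = q1.2 := by linear_combination e1
        have a2 : q2.1 = q2.2 := by linear_combination e2
        rw [← a1, ← a2, he]
      exact Prod.ext he this
    · intro x hx
      exact ⟨(x, x), Finset.mem_filter.mpr ⟨Finset.mem_product.mpr ⟨hx, hx⟩, by ring⟩, rfl⟩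
  -- split off g = 0
  rw [← Finset.add_sum_erase Finset.univ _ (Finset.mem_univ (0 : ZMod n))]
  rw [hdiag, map_zero, rho_zero]
  have hrest : ∀ g ∈ Finset.univ.erase (0 : ZMod n),
      ((D ×ˢ D).filter (fun q => q.1 - q.2 = g)).card • rho (π g) = lam • rho (π g) := by
    intro g hg
    rw [hlam g (Finset.ne_of_mem_erase hg)]
  rw [Finset.sum_congr rfl hrest]
  have hsplit : ∑ g ∈ Finset.univ.erase (0 : ZMod n), lam • rho (π g)
      = (∑ g : ZMod n, lam • rho (π g)) - lam • rho (π 0) :=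
    Finset.sum_erase_eq_sub (Finset.mem_univ _)
  rw [hsplit, map_zero, rho_zero]
  -- total sum over all g is 0
  have hfib : ∀ t : ZMod 5,
      (Finset.univ.filter fun g : ZMod n => π g = t).card
        = (Finset.univ.filter fun g : ZMod n => π g = (0:ZMod 5)).card := by
    intro t
    set gt : ZMod n := ((t.val : ℕ) : ZMod n) with hgt
    have hπgt : π gt = t := by
      rw [hgt, map_natCast, ZMod.natCast_val, ZMod.cast_id]
    apply Finset.card_bij' (fun g _ => g - gt) (fun g _ => g + gt)
    · intro g hg
      rw [Finset.mem_filter] at hg ⊢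
      refine ⟨Finset.mem_univ _, ?_⟩
      rw [map_sub, hg.2, hπgt, sub_self]
    · intro g hg
      rw [Finset.mem_filter] at hg ⊢
      refine ⟨Finset.mem_univ _, ?_⟩
      rw [map_add, hg.2, hπgt, zero_add]
    · intro g _; ring
    · intro g _; ring
  have htot : (∑ g : ZMod n, rho (π g)) = 0 := by
    rw [← Finset.sum_fiberwise Finset.univ π (fun g => rho (π g))]
    have : ∀ t : ZMod 5, (∑ g ∈ Finset.univ.filter (fun g : ZMod n => π g = t), rho (π g))
        = (Finset.univ.filter fun g : ZMod n => π g = (0:ZMod 5)).card • rho t := by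
      intro t
      rw [Finset.sum_congr rfl (fun g hg => by rw [(Finset.mem_filter.mp hg).2])]
      rw [Finset.sum_const, hfib t]
    rw [Finset.sum_congr rfl fun t _ => this t]
    rw [← Finset.smul_sum, sum_rho, smul_zero]
  have htot2 : (∑ g : ZMod n, lam • rho (π g)) = 0 := by
    rw [← Finset.smul_sum, htot, smul_zero]
  rw [htot2]
  simp only [nsmul_eq_mul, mul_one]
  ring

end DS
section Seq

lemma sum_range_zmod {M : Type*} [AddCommMonoid M] (n : ℕ) [NeZero n] (f : ZMod n → M) :
    ∑ i ∈ Finset.range n, f ((i : ℕ) : ZMod n) = ∑ z : ZMod n, f z := by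
  refine Finset.sum_nbij' (fun i => ((i : ℕ) : ZMod n)) (fun z => z.val) ?_ ?_ ?_ ?_ ?_
  · intro a _; exact Finset.mem_univ _
  · intro z _
    rw [Finset.mem_range]
    exact ZMod.val_lt z
  · intro a ha
    rw [Finset.mem_range] at ha
    exact ZMod.val_cast_of_lt ha
  · intro z _
    exact ZMod.natCast_rightInverse z
  · intro a _; rfl

lemma seq_to_counts (n : ℕ) (hn : 5 ≤ n) (a : ℤ → ℤ)
    (hval : ∀ i : ℤ, a i = -1 ∨ a i = 1) (hper : ∀ i : ℤ, a (i + (n:ℤ)) = a i)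
    (hauto : ∀ t : ℤ, 1 ≤ t → t ≤ (n:ℤ) - 1 →
      (∑ i ∈ Finset.range n, a i * a (i + t)) = 1)
    (u : ℤ) (hun : u ^ 2 = 2 * (n:ℤ) - 1) :
    ∃ D : Finset (ZMod n),
      2 * (D.card : ℤ) = (n : ℤ) - u ∧
      ∀ g : ZMod n, g ≠ 0 →
        4 * (((D ×ˢ D).filter (fun q => q.1 - q.2 = g)).card : ℤ)
          = (n : ℤ) - 2 * u + 1 := by
  haveI : NeZero n := ⟨by omega⟩
  have hper' : Function.Periodic a (n:ℤ) := hper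
  set b : ZMod n → ℤ := fun z => a (z.val : ℤ) with hb
  have hab : ∀ i : ℤ, a i = b ((i : ZMod n)) := by
    intro i
    have h1 : ((((i : ZMod n).val : ℕ) : ℤ) : ZMod n) = (i : ZMod n) := by
      push_cast
      rw [ZMod.natCast_val, ZMod.cast_id]
    rw [ZMod.intCast_eq_intCast_iff] at h1
    obtain ⟨q, hq⟩ := h1.dvd
    have h3 : i - q * (n:ℤ) = ((i : ZMod n).val : ℤ) := by linarith
    calc a i = a (i - q * (n:ℤ)) := (hper'.sub_int_mul_eq q).symm
    _ = b ((i : ZMod n)) := by rw [h3]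
  have hbval : ∀ z : ZMod n, b z = -1 ∨ b z = 1 := fun z => hval _
  set S : ℤ := ∑ z : ZMod n, b z with hS
  -- autocorrelation in terms of b
  have hCg : ∀ g : ZMod n, g ≠ 0 → (∑ z : ZMod n, b z * b (z + g)) = 1 := by
    intro g hg
    have hval1 : 1 ≤ (g.val : ℤ) := by
      have : g.val ≠ 0 := fun h0 => hg (by rwa [← ZMod.val_eq_zero])
      omega
    have hval2 : (g.val : ℤ) ≤ (n:ℤ) - 1 := by
      have := ZMod.val_lt g
      omega
    have h := hauto (g.val : ℤ) hval1 hval2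
    rw [← h]
    rw [← sum_range_zmod n (fun z => b z * b (z + g))]
    apply Finset.sum_congr rfl
    intro i _
    have e1 : a (i:ℤ) = b ((i:ℕ) : ZMod n) := by
      rw [hab (i:ℤ)]
      norm_cast
    have e2 : a ((i:ℤ) + (g.val:ℤ)) = b (((i:ℕ) : ZMod n) + g) := by
      rw [hab ((i:ℤ) + (g.val:ℤ))]
      congr 1
      push_cast
      rw [ZMod.natCast_val, ZMod.cast_id]
    rw [e1, e2]
  have hC0 : (∑ z : ZMod n, b z * b z) = (n : ℤ) := by
    have : ∀ z : ZMod n, b z * b z = 1 := by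
      intro z; rcases hbval z with h|h <;> rw [h] <;> ring
    rw [Finset.sum_congr rfl fun z _ => this z, Finset.sum_const, Finset.card_univ,
      ZMod.card, nsmul_eq_mul, mul_one]
  have hshift : ∀ g : ZMod n, (∑ z : ZMod n, b (z + g)) = S := by
    intro g
    exact Fintype.sum_equiv (Equiv.addRight g) _ _ (fun z => rfl)
  have hshift' : ∀ g : ZMod n, (∑ z : ZMod n, b (g + z)) = S := by
    intro g
    exact Fintype.sum_equiv (Equiv.addLeft g) _ _ (fun z => rfl)
  -- S^2 = 2n - 1
  have hsq : S * S = 2 * (n:ℤ) - 1 := by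
    have hT1 : (∑ g : ZMod n, ∑ z : ZMod n, b z * b (z + g)) = S * S := by
      rw [Finset.sum_comm]
      have : ∀ z : ZMod n, (∑ g : ZMod n, b z * b (z + g)) = b z * S := by
        intro z
        rw [← Finset.mul_sum, hshift' z]
      rw [Finset.sum_congr rfl fun z _ => this z, ← Finset.sum_mul]
    have hT2 : (∑ g : ZMod n, ∑ z : ZMod n, b z * b (z + g))
        = (n:ℤ) + ((n:ℤ) - 1) := by
      rw [← Finset.add_sum_erase Finset.univ _ (Finset.mem_univ (0 : ZMod n))]
      have h0 : (∑ z : ZMod n, b z * b (z + 0)) = (n:ℤ) := by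
        simpa using hC0
      rw [h0]
      have h1 : ∀ g ∈ Finset.univ.erase (0 : ZMod n),
          (∑ z : ZMod n, b z * b (z + g)) = 1 :=
        fun g hg => hCg g (Finset.ne_of_mem_erase hg)
      rw [Finset.sum_congr rfl h1, Finset.sum_const, Finset.card_erase_of_mem
        (Finset.mem_univ _), Finset.card_univ, ZMod.card, nsmul_eq_mul, mul_one]
      have : (1:ℕ) ≤ n := by omega
      push_cast [Nat.cast_sub this]
      ring
    rw [hT1] at hT2
    linarith [hT2]
  -- the two candidate signs
  have hSor : S = u ∨ S = -u := by
    have : (S - u) * (S + u) = 0 := by linear_combination hsq - hun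
    rcases mul_eq_zero.mp this with h|h
    · left; linarith
    · right; linarith
  -- main construction given a sign e with e * S = -u
  have main : ∀ e : ℤ, (e = 1 ∨ e = -1) → e * S = -u →
      ∃ D : Finset (ZMod n),
        2 * (D.card : ℤ) = (n : ℤ) - u ∧
        ∀ g : ZMod n, g ≠ 0 →
          4 * (((D ×ˢ D).filter (fun q => q.1 - q.2 = g)).card : ℤ)
            = (n : ℤ) - 2 * u + 1 := by
    intro e he heS
    have he2 : e * e = 1 := by rcases he with h|h <;> rw [h] <;> ring
    have hbne : ∀ z : ZMod n, b z ≠ e → b z = -e := by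
      intro z hz
      rcases hbval z with h|h <;> rcases he with h'|h' <;>
        simp only [h, h'] at hz ⊢ <;> omega
    refine ⟨Finset.univ.filter (fun z => b z = e), ?_, ?_⟩
    · -- cardinality
      have hsum : (∑ z : ZMod n, (1 + e * b z)) = (n:ℤ) + e * S := by
        rw [Finset.sum_add_distrib, ← Finset.mul_sum, Finset.sum_const,
          Finset.card_univ, ZMod.card, nsmul_eq_mul, mul_one, ← hS]
      have hsplit := Finset.sum_filter_add_sum_filter_not Finset.univ
        (fun z => b z = e) (fun z => 1 + e * b z)
      have hA : (∑ z ∈ Finset.univ.filter (fun z => b z = e), (1 + e * b z))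
          = 2 * ((Finset.univ.filter (fun z : ZMod n => b z = e)).card : ℤ) := by
        have hterm : ∀ z ∈ Finset.univ.filter (fun z : ZMod n => b z = e),
            (1 : ℤ) + e * b z = 2 := by
          intro z hz
          rw [(Finset.mem_filter.mp hz).2]
          linear_combination he2
        rw [Finset.sum_congr rfl hterm, Finset.sum_const, nsmul_eq_mul, mul_comm]
      have hB : (∑ z ∈ Finset.univ.filter (fun z => ¬ (b z = e)), (1 + e * b z)) = 0 := by
        have hterm : ∀ z ∈ Finset.univ.filter (fun z : ZMod n => ¬ (b z = e)),
            (1 : ℤ) + e * b z = 0 := by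
          intro z hz
          rw [hbne z (Finset.mem_filter.mp hz).2]
          linear_combination -he2
        rw [Finset.sum_congr rfl hterm, Finset.sum_const, smul_zero]
      rw [hA, hB, hsum] at hsplit
      linarith [heS, hsplit]
    · -- the counting for each g ≠ 0
      intro g hg
      set D := Finset.univ.filter (fun z : ZMod n => b z = e) with hD
      -- pair count equals point count
      have hcard : ((D ×ˢ D).filter (fun q => q.1 - q.2 = g)).card
          = (Finset.univ.filter (fun z : ZMod n => b z = e ∧ b (z + g) = e)).card := by
        apply Finset.card_nbij' (fun q => q.2) (fun z => (z + g, z))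
        · intro q hq
          rw [Finset.mem_coe, Finset.mem_filter] at hq ⊢
          obtain ⟨hq1, hq2⟩ := hq
          rw [Finset.mem_product] at hq1
          have e1 : q.1 = q.2 + g := by linear_combination hq2
          refine ⟨Finset.mem_univ _, (Finset.mem_filter.mp hq1.2).2, ?_⟩
          rw [← e1]
          exact (Finset.mem_filter.mp hq1.1).2
        · intro z hz
          rw [Finset.mem_coe, Finset.mem_filter] at hz ⊢
          refine ⟨Finset.mem_product.mpr ⟨?_, ?_⟩, by ring⟩
          · exact Finset.mem_filter.mpr ⟨Finset.mem_univ _, hz.2.2⟩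
          · exact Finset.mem_filter.mpr ⟨Finset.mem_univ _, hz.2.1⟩
        · intro q hq
          rw [Finset.mem_coe, Finset.mem_filter] at hq
          have e1 : q.1 = q.2 + g := by linear_combination hq.2
          exact Prod.ext e1.symm rfl
        · intro z _; rfl
      rw [hcard]
      -- expand the sum
      have hsum : (∑ z : ZMod n, (1 + e * b z) * (1 + e * b (z + g)))
          = (n:ℤ) + 2 * (e * S) + 1 := by
        have expand : ∀ z : ZMod n, (1 + e * b z) * (1 + e * b (z + g))
            = 1 + e * b z + e * b (z + g) + (e*e) * (b z * b (z + g)) := by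
          intro z; ring
        rw [Finset.sum_congr rfl fun z _ => expand z]
        rw [Finset.sum_add_distrib, Finset.sum_add_distrib, Finset.sum_add_distrib]
        rw [← Finset.mul_sum, ← Finset.mul_sum, ← Finset.mul_sum]
        rw [hshift g, hCg g hg, Finset.sum_const, Finset.card_univ, ZMod.card,
          nsmul_eq_mul, mul_one, he2]
        ring
      have hsplit := Finset.sum_filter_add_sum_filter_not Finset.univ
        (fun z => b z = e ∧ b (z + g) = e) (fun z => (1 + e * b z) * (1 + e * b (z + g)))
      have hA : (∑ z ∈ Finset.univ.filter (fun z => b z = e ∧ b (z + g) = e),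
          (1 + e * b z) * (1 + e * b (z + g)))
          = 4 * ((Finset.univ.filter (fun z : ZMod n => b z = e ∧ b (z + g) = e)).card : ℤ) := by
        have hterm : ∀ z ∈ Finset.univ.filter (fun z : ZMod n => b z = e ∧ b (z + g) = e),
            ((1:ℤ) + e * b z) * (1 + e * b (z + g)) = 4 := by
          intro z hz
          obtain ⟨h1, h2⟩ := (Finset.mem_filter.mp hz).2
          rw [h1, h2]
          linear_combination (e*e + 3) * he2
        rw [Finset.sum_congr rfl hterm, Finset.sum_const, nsmul_eq_mul, mul_comm]
      have hB : (∑ z ∈ Finset.univ.filter (fun z => ¬ (b z = e ∧ b (z + g) = e)),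
          (1 + e * b z) * (1 + e * b (z + g))) = 0 := by
        have hterm : ∀ z ∈ Finset.univ.filter
            (fun z : ZMod n => ¬ (b z = e ∧ b (z + g) = e)),
            ((1:ℤ) + e * b z) * (1 + e * b (z + g)) = 0 := by
          intro z hz
          have hz2 := (Finset.mem_filter.mp hz).2
          by_cases hc : b z = e
          · have hc2 : b (z + g) ≠ e := fun h => hz2 ⟨hc, h⟩
            rw [hbne _ hc2]
            linear_combination (1 + e * b z) * -he2
          · rw [hbne _ hc]
            linear_combination (1 + e * b (z+g)) * -he2
        rw [Finset.sum_congr rfl hterm, Finset.sum_const, smul_zero]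
      rw [hA, hB, hsum] at hsplit
      linarith [hsplit, heS]
  rcases hSor with h|h
  · exact main (-1) (Or.inr rfl) (by rw [h]; ring)
  · exact main 1 (Or.inl rfl) (by rw [h]; ring)

end Seq

end CDSProof

theorem stmt1 (u : ℕ) (hu : 3 ≤ u) (hmod : u % 10 = 3 ∨ u % 10 = 7)
    (h : Even (padicValNat 2 (u ^ 2 - 1)) ∨
      ∃ p : ℕ, p.Prime ∧ Odd p ∧ (p % 5 = 2 ∨ p % 5 = 3 ∨ p % 5 = 4) ∧
        (Odd (padicValNat p (u + 1)) ∨ Odd (padicValNat p (u - 1)))) :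
    (¬ ∃ D : Finset (ZMod ((u ^ 2 + 1) / 2)),
        IsCDS ((u ^ 2 + 1) / 2) ((u - 1) ^ 2 / 4) ((u - 1) * (u - 3) / 8) D) ∧
    ¬ ∃ a : ℤ → ℤ, IsBinarySeq ((u ^ 2 + 1) / 2) a ∧
        HasConstAutocorr ((u ^ 2 + 1) / 2) a 1 := by
  classical
  have hu2 : u % 2 = 1 := by omega
  obtain ⟨v, hv⟩ : ∃ v, u = 2 * v + 1 := ⟨u / 2, by omega⟩
  have hv1 : 1 ≤ v := by omega
  have hsq : u ^ 2 = 4 * (v * v) + 4 * v + 1 := by rw [hv]; ring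
  set n := (u ^ 2 + 1) / 2 with hn
  have hnval : n = 2 * (v * v) + 2 * v + 1 := by rw [hn]; omega
  have hk : (u - 1) ^ 2 / 4 = v * v := by
    have h1 : u - 1 = 2 * v := by omega
    have h2 : (u-1)^2 = 4 * (v*v) := by rw [h1]; ring
    omega
  -- λ = w0 with v(v-1) = 2 w0
  have hevv : Even ((v-1) * ((v-1)+1)) := Nat.even_mul_succ_self (v-1)
  rw [show (v-1)+1 = v by omega] at hevv
  obtain ⟨w0, hw0⟩ := hevv
  have hvv : v * (v-1) + v = v * v := by
    calc v * (v-1) + v = v * ((v-1)+1) := by ring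
    _ = v * v := by rw [show (v-1)+1 = v by omega]
  have hw0' : v * v = 2 * w0 + v := by
    have : (v-1) * v = v * (v-1) := Nat.mul_comm _ _
    omega
  have hlam : (u - 1) * (u - 3) / 8 = w0 := by
    have h1 : u - 1 = 2 * v := by omega
    have h3 : u - 3 = 2 * (v-1) := by omega
    have h4 : (u-1)*(u-3) = 4 * (v * (v-1)) := by rw [h1, h3]; ring
    have h5 : (v-1) * v = v * (v-1) := Nat.mul_comm _ _
    omega
  -- m = w1 with v(v+1) = 2 w1
  obtain ⟨w1, hw1⟩ := Nat.even_mul_succ_self v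
  have hw1' : v * v + v = 2 * w1 := by
    have : v * (v + 1) = v * v + v := by ring
    omega
  have hm0 : w1 ≠ 0 := by
    have h5 : v ≤ v * v := Nat.le_mul_of_pos_left v hv1
    omega
  have hkl : v * v = w0 + w1 := by omega
  have hm8 : u ^ 2 - 1 = 8 * w1 := by omega
  -- the prime and the odd valuation
  obtain ⟨p, hp, hp5, hodd⟩ : ∃ p : ℕ, p.Prime ∧
      (p % 5 = 2 ∨ p % 5 = 3 ∨ p % 5 = 4) ∧ Odd (padicValNat p w1) := by
    rcases h with h1 | ⟨p, hp, hpodd, hp5, hval⟩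
    · refine ⟨2, Nat.prime_two, by norm_num, ?_⟩
      have hval8 : padicValNat 2 (u^2 - 1) = 3 + padicValNat 2 w1 := by
        rw [hm8, show (8:ℕ) = 2^3 by norm_num,
          padicValNat.mul (a := 2^3) (by norm_num) hm0,
          padicValNat.prime_pow]
      rw [hval8] at h1
      rcases h1 with ⟨t, ht⟩
      rw [Nat.odd_iff]
      omega
    · refine ⟨p, hp, hp5, ?_⟩
      haveI : Fact p.Prime := ⟨hp⟩
      have hpne2 : p ≠ 2 := by
        rw [Nat.odd_iff] at hpodd; omega
      have hv8 : padicValNat p 8 = 0 := by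
        apply padicValNat.eq_zero_of_not_dvd
        intro hd
        rw [show (8:ℕ) = 2^3 by norm_num] at hd
        have := Nat.Prime.dvd_of_dvd_pow hp hd
        have := (Nat.prime_dvd_prime_iff_eq hp Nat.prime_two).mp this
        exact hpne2 this
      have hsplit : padicValNat p (u^2 - 1) = padicValNat p w1 := by
        rw [hm8, padicValNat.mul (by norm_num) hm0, hv8, zero_add]
      have e1 : (u+1) * (u-1) = 8 * w1 := by
        have a1 : u + 1 = 2*v + 2 := by omega
        have a2 : u - 1 = 2*v := by omega
        rw [a1, a2]
        calc (2*v+2)*(2*v) = 4 * (v * (v+1)) := by ring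
        _ = 8 * w1 := by rw [hw1]; ring
      have hfactor : padicValNat p (u+1) + padicValNat p (u-1) = padicValNat p w1 := by
        rw [← padicValNat.mul (a := u+1) (by omega) (by omega), e1, ← hm8, hsplit]
      have hdvd2 : ¬ (p ∣ (u+1) ∧ p ∣ (u-1)) := by
        rintro ⟨d1, d2⟩
        have hd : p ∣ 2 := by
          have := Nat.dvd_sub d1 d2
          rwa [show u + 1 - (u-1) = 2 by omega] at this
        have := (Nat.prime_dvd_prime_iff_eq hp Nat.prime_two).mp hd
        exact hpne2 this
      rcases hval with ho | ho
      · have hdd : p ∣ u + 1 := by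
          by_contra hnd
          rw [padicValNat.eq_zero_of_not_dvd hnd] at ho
          simpa using ho
        have hz : padicValNat p (u-1) = 0 :=
          padicValNat.eq_zero_of_not_dvd (fun hd => hdvd2 ⟨hdd, hd⟩)
        rw [← hfactor, hz, add_zero]
        exact ho
      · have hdd : p ∣ u - 1 := by
          by_contra hnd
          rw [padicValNat.eq_zero_of_not_dvd hnd] at ho
          simpa using ho
        have hz : padicValNat p (u+1) = 0 :=
          padicValNat.eq_zero_of_not_dvd (fun hd => hdvd2 ⟨hd, hdd⟩)
        rw [← hfactor, hz, zero_add]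
        exact ho
  have hn0 : n ≠ 0 := by omega
  have h5n : (5:ℕ) ∣ n := by
    have hu5 : u % 5 = 3 ∨ u % 5 = 2 := by omega
    have hsq5 : u^2 % 5 = 4 := by
      rw [Nat.pow_mod]
      rcases hu5 with h'|h' <;> rw [h'] <;> norm_num
    omega
  -- first conjunct
  have hnocds : ¬ ∃ D : Finset (ZMod n),
      IsCDS n ((u - 1) ^ 2 / 4) ((u - 1) * (u - 3) / 8) D := by
    rintro ⟨D, hcard, hlam'⟩
    have key := CDSProof.ds_eq n (v*v) w0 hn0 h5n D
      (by rw [← hk]; exact hcard)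
      (fun g hg => by rw [← hlam]; exact hlam' g hg)
    have hcast : ((v*v : ℕ) : Rc) - ((w0 : ℕ) : Rc) = ((w1 : ℕ) : Rc) := by
      rw [hkl]; push_cast; ring
    exact CDSProof.no_tau_solution hp hp5 w1 hm0 hodd _ (key.trans hcast)
  refine ⟨hnocds, ?_⟩
  rintro ⟨a, ⟨haval, haper⟩, hauto⟩
  have h2n : (u:ℤ)^2 = 2 * (n:ℤ) - 1 := by
    have : 2 * n = u^2 + 1 := by omega
    have := congrArg (fun x : ℕ => (x:ℤ)) this
    push_cast at this
    linarith
  obtain ⟨D, hDcard, hDcount⟩ := CDSProof.seq_to_counts n (by omega) a haval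
    (fun i => haper i) (fun t h1 h2 => hauto t h1 h2) u h2n
  -- numeric conversions
  have hA : ((v*v : ℕ) : ℤ) = 2*(w0:ℤ) + (v:ℤ) := by exact_mod_cast hw0'
  have hni : (n:ℤ) = 2*((v*v:ℕ):ℤ) + 2*(v:ℤ) + 1 := by exact_mod_cast hnval
  have hui : (u:ℤ) = 2*(v:ℤ) + 1 := by exact_mod_cast hv
  apply hnocds
  refine ⟨D, ?_, ?_⟩
  · rw [hk]
    have : (D.card : ℤ) = ((v*v : ℕ) : ℤ) := by linarith
    exact_mod_cast this
  · intro g hg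
    rw [hlam]
    have hc := hDcount g hg
    have : ((((D ×ˢ D).filter (fun q => q.1 - q.2 = g)).card : ℕ) : ℤ) = (w0:ℤ) := by
      linarith
    exact_mod_cast this
end
end

section
/- Let u be a positive integer with u ≡ 3 (mod 10) or u ≡ 7 (mod 10). Then v_2(u²-1) is even if and only if there exist an integer l ≥ 1 and a sign ε ∈ {1,-1} such that u ≡ ε·(2^{2l+1}+(-1)^l) (mod 5·2^{2l+2}) or u ≡ ε·(3·2^{2l+1}+(-1)^l) (mod 5·2^{2l+2}). -/
private lemma padic_two_eq {n : ℤ} {k : ℕ} (hn : n ≠ 0)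
    (h1 : (2:ℤ)^k ∣ n) (h2 : ¬ (2:ℤ)^(k+1) ∣ n) : padicValInt 2 n = k := by
  haveI : Fact (Nat.Prime 2) := ⟨Nat.prime_two⟩
  have i1 : k ≤ padicValInt 2 n := by
    have := (padicValInt_dvd_iff (p := 2) k n).mp (by exact_mod_cast h1)
    tauto
  have i2 : ¬ (k+1) ≤ padicValInt 2 n := by
    intro h
    exact h2 (by exact_mod_cast (padicValInt_dvd_iff (p := 2) (k+1) n).mpr (Or.inr h))
  omega

private lemma val_formula {u δ : ℤ} (hu : 3 ≤ u) (hδ : δ = 1 ∨ δ = -1) {k : ℕ} (hk : 2 ≤ k)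
    (h1 : (2:ℤ)^k ∣ u - δ) (h2 : ¬ (2:ℤ)^(k+1) ∣ u - δ) :
    padicValInt 2 (u^2 - 1) = k + 1 := by
  have hne1 : u - δ ≠ 0 := by rcases hδ with h|h <;> omega
  have hne2 : u + δ ≠ 0 := by rcases hδ with h|h <;> omega
  have hδ2 : δ * δ = 1 := by rcases hδ with h|h <;> simp [h]
  have hfac : u^2 - 1 = (u - δ) * (u + δ) := by
    have : (u - δ) * (u + δ) = u^2 - δ * δ := by ring
    rw [this, hδ2]
  have h4 : (4:ℤ) ∣ u - δ := by
    have : (2:ℤ)^2 ∣ (2:ℤ)^k := pow_dvd_pow 2 hk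
    have := this.trans h1
    norm_num at this
    exact this
  obtain ⟨c, hc⟩ := h4
  have hval1 : padicValInt 2 (u - δ) = k := padic_two_eq hne1 h1 h2
  have hval2 : padicValInt 2 (u + δ) = 1 := by
    apply padic_two_eq hne2
    · exact ⟨2*c + δ, by omega⟩
    · intro ⟨d, hd⟩
      norm_num at hd
      rcases hδ with h|h <;> omega
  rw [hfac, padicValInt.mul hne1 hne2, hval1, hval2]

private lemma helper_mod2 (P u δ ε s m t c : ℤ) (hm : u - δ = P * m)
    (ht : m - ε*c = 2*t) (hes : ε*s = δ) :
    (P*2) ∣ ε*(c*P+s) - u :=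
  ⟨-t, by linear_combination (-1)*hm + (-P)*ht + hes⟩

private lemma back_lemma {u ε c : ℤ} {l : ℕ} (hu : 3 ≤ u) (hε : ε = 1 ∨ ε = -1)
    (hc : c = 1 ∨ c = 3) (hl : 1 ≤ l)
    (h : Int.ModEq (2^(2*l+2)) u (ε * (c * 2^(2*l+1) + (-1)^l))) :
    padicValInt 2 (u^2-1) = 2*l+2 := by
  set s : ℤ := (-1)^l with hsdef
  have hs : s = 1 ∨ s = -1 := neg_one_pow_eq_or ℤ l
  set δ : ℤ := ε * s with hδdef
  have hδ : δ = 1 ∨ δ = -1 := by rcases hε with h1|h1 <;> rcases hs with h2|h2 <;>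
    simp [hδdef, h1, h2]
  have hP2 : (2:ℤ)^(2*l+2) = 2^(2*l+1) * 2 := by ring
  have hdvd : (2:ℤ)^(2*l+1) * 2 ∣ ε * (c * 2^(2*l+1) + s) - u := by
    rw [← hP2]; exact h.dvd
  have hecodd : ε * c = 1 ∨ ε * c = 3 ∨ ε * c = -1 ∨ ε * c = -3 := by
    rcases hε with h1|h1 <;> rcases hc with h2|h2 <;> simp [h1, h2]
  have key : ε * (c * 2^(2*l+1) + s) - u = ε * c * 2^(2*l+1) + δ - u := by
    rw [hδdef]; ring
  have h1 : (2:ℤ)^(2*l+1) ∣ u - δ := by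
    obtain ⟨w, hw⟩ := hdvd
    exact ⟨ε * c - w * 2, by linear_combination key - hw⟩
  have h2 : ¬ (2:ℤ)^(2*l+1+1) ∣ u - δ := by
    intro hbad
    obtain ⟨w, hw⟩ := hdvd
    obtain ⟨v, hv⟩ := hbad
    have hP : (0:ℤ) < 2^(2*l+1) := by positivity
    have hmain : ε * c * 2^(2*l+1) = 2^(2*l+1) * 2 * (w + v) := by
      have h2eq : (2:ℤ)^(2*l+1+1) = 2^(2*l+1) * 2 := by ring
      rw [h2eq] at hv
      linear_combination hw + hv - key
    have h2div : (2:ℤ) ∣ ε * c := by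
      have hcc : (2:ℤ)^(2*l+1) * (ε * c) = (2:ℤ)^(2*l+1) * (2 * (w + v)) := by
        linear_combination hmain
      exact ⟨w + v, mul_left_cancel₀ (ne_of_gt hP) hcc⟩
    rcases hecodd with h|h|h|h <;> omega
  have := val_formula hu hδ (by omega : 2 ≤ 2*l+1) h1 h2
  omega

theorem stmt2 (u : ℤ) (hu : 0 < u) (hmod : u % 10 = 3 ∨ u % 10 = 7) :
    Even (padicValInt 2 (u ^ 2 - 1)) ↔
      ∃ l : ℕ, 1 ≤ l ∧ ∃ ε : ℤ, (ε = 1 ∨ ε = -1) ∧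
        (Int.ModEq (5 * 2 ^ (2 * l + 2)) u (ε * (2 ^ (2 * l + 1) + (-1) ^ l)) ∨
         Int.ModEq (5 * 2 ^ (2 * l + 2)) u (ε * (3 * 2 ^ (2 * l + 1) + (-1) ^ l))) := by
  have hu3 : 3 ≤ u := by omega
  haveI : Fact (Nat.Prime 2) := ⟨Nat.prime_two⟩
  constructor
  · intro hEven
    obtain ⟨δ, hδ, h4⟩ : ∃ δ : ℤ, (δ = 1 ∨ δ = -1) ∧ (4:ℤ) ∣ u - δ := by
      have h4mod : u % 4 = 1 ∨ u % 4 = 3 := by omega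
      rcases h4mod with h|h
      · exact ⟨1, Or.inl rfl, by omega⟩
      · exact ⟨-1, Or.inr rfl, by omega⟩
    have hne1 : u - δ ≠ 0 := by rcases hδ with h|h <;> omega
    set k := padicValInt 2 (u - δ) with hkdef
    have h1 : (2:ℤ)^k ∣ u - δ := by exact_mod_cast padicValInt_dvd (p := 2) (u - δ)
    have h2 : ¬ (2:ℤ)^(k+1) ∣ u - δ := by
      intro hbad
      have := (padicValInt_dvd_iff (p := 2) (k+1) (u - δ)).mp (by exact_mod_cast hbad)
      rcases this with h|h
      · exact hne1 h
      · omega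
    have hk2 : 2 ≤ k := by
      by_contra hcon
      apply h2
      refine dvd_trans ?_ h4
      have hle : k + 1 ≤ 2 := by omega
      have := pow_dvd_pow (2:ℤ) hle
      norm_num at this
      exact this
    have hval := val_formula hu3 hδ hk2 h1 h2
    rw [hval] at hEven
    obtain ⟨l, hl1, hkl⟩ : ∃ l : ℕ, 1 ≤ l ∧ k = 2*l+1 := by
      obtain ⟨m, hm⟩ := hEven
      exact ⟨m - 1, by omega, by omega⟩
    rw [hkl] at h1 h2
    obtain ⟨m, hm⟩ := h1
    have hmodd : m % 2 = 1 := by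
      rcases Int.emod_two_eq m with h|h
      · exfalso
        apply h2
        obtain ⟨c, hc⟩ : ∃ c, m = 2*c := ⟨m/2, by omega⟩
        exact ⟨c, by rw [hm, hc]; ring⟩
      · exact h
    have hs : ((-1:ℤ))^l = 1 ∨ ((-1:ℤ))^l = -1 := neg_one_pow_eq_or ℤ l
    set s : ℤ := (-1)^l with hsdef
    set ε : ℤ := δ * s with hεdef
    have hε : ε = 1 ∨ ε = -1 := by
      rcases hδ with h|h <;> rcases hs with h'|h' <;> simp [hεdef, h, h']
    have hes : ε * s = δ := by
      rcases hs with h'|h' <;> rw [hεdef, h'] <;> ring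
    have hm2 : ∀ c : ℤ, (c = 1 ∨ c = 3) →
        Int.ModEq (2^(2*l+2)) u (ε*(c*2^(2*l+1)+s)) := by
      intro c hc
      rw [Int.modEq_iff_dvd]
      obtain ⟨t, ht⟩ : ∃ t, m - ε*c = 2*t := by
        rcases hε with h|h <;> rcases hc with h'|h' <;>
          exact ⟨(m - ε*c)/2, by rw [h, h']; omega⟩
      have := helper_mod2 (2^(2*l+1)) u δ ε s m t c hm ht hes
      have hP2 : (2:ℤ)^(2*l+2) = 2^(2*l+1)*2 := by ring
      rw [hP2]
      exact this
    have hpow5 : Int.ModEq 5 ((2:ℤ)^(2*l+1)) (2*s) := by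
      have h4l : Int.ModEq 5 ((4:ℤ)^l) ((-1:ℤ)^l) := Int.ModEq.pow l (by decide)
      have he : (2:ℤ)^(2*l+1) = (4:ℤ)^l * 2 := by
        rw [pow_succ, pow_mul]; norm_num
      rw [he, hsdef]
      calc (4:ℤ)^l * 2 ≡ (-1:ℤ)^l * 2 [ZMOD 5] := h4l.mul_right 2
        _ = 2 * (-1)^l := by ring
    have hmod5 : ∀ c : ℤ, (c = 1 ∨ c = 3) →
        Int.ModEq 5 (ε*(c*2^(2*l+1)+s)) (δ*(2*c+1)) := by
      intro c hc
      have step : Int.ModEq 5 (ε*(c*2^(2*l+1)+s)) (ε*(c*(2*s)+s)) :=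
        ((hpow5.mul_left c).add_right s).mul_left ε
      have he : ε*(c*(2*s)+s) = δ*(2*c+1) := by linear_combination (2*c+1)*hes
      rw [← he]
      exact step
    have hcop : (Int.natAbs 5).Coprime (Int.natAbs ((2:ℤ)^(2*l+2))) := by
      rw [Int.natAbs_pow]
      exact Nat.Coprime.pow_right _ (by norm_num)
    have hcrt : ∀ c : ℤ, (c = 1 ∨ c = 3) → Int.ModEq 5 u (δ*(2*c+1)) →
        Int.ModEq (5*2^(2*l+2)) u (ε*(c*2^(2*l+1)+s)) := by
      intro c hc h5
      exact (Int.modEq_and_modEq_iff_modEq_mul hcop).mp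
        ⟨h5.trans (hmod5 c hc).symm, hm2 c hc⟩
    refine ⟨l, hl1, ε, hε, ?_⟩
    rw [← hsdef]
    rcases hδ with hδ1|hδ1 <;> rcases hmod with hm10|hm10
    · refine Or.inl ?_
      have := hcrt 1 (Or.inl rfl) (by rw [Int.modEq_iff_dvd, hδ1]; omega)
      rw [one_mul] at this
      exact this
    · refine Or.inr ?_
      exact hcrt 3 (Or.inr rfl) (by rw [Int.modEq_iff_dvd, hδ1]; omega)
    · refine Or.inr ?_
      exact hcrt 3 (Or.inr rfl) (by rw [Int.modEq_iff_dvd, hδ1]; omega)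
    · refine Or.inl ?_
      have := hcrt 1 (Or.inl rfl) (by rw [Int.modEq_iff_dvd, hδ1]; omega)
      rw [one_mul] at this
      exact this
  · rintro ⟨l, hl, ε, hε, h⟩
    have hdvd : ((2:ℤ)^(2*l+2)) ∣ 5 * 2^(2*l+2) := ⟨5, by ring⟩
    rcases h with h|h
    · have h' := h.of_dvd hdvd
      have := back_lemma hu3 hε (Or.inl rfl) hl
        (by rw [show (1:ℤ)*2^(2*l+1) = 2^(2*l+1) from one_mul _]; exact h')
      rw [this]
      exact ⟨l+1, by ring⟩
    · have h' := h.of_dvd hdvd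
      have := back_lemma hu3 hε (Or.inr rfl) hl h'
      rw [this]
      exact ⟨l+1, by ring⟩
end

section
/- Let u ≥ 3 be an integer such that u ≡ 7, 23, 57, or 73 (mod 80), or u ≡ 33, 97, 223, or 287 (mod 320). Then there is no binary sequence of period (u²+1)/2 with all nontrivial autocorrelation values equal to 1. -/
/-- existence of a solution to the two quadratic equations with value `v` -/
def HasSol (v : ℤ) : Prop :=
  ∃ a b c d e : ℤ,
    a*a + b*b + c*c + d*d + e*e - (a*b + b*c + c*d + d*e + e*a) = v ∧
    a*a + b*b + c*c + d*d + e*e - (a*c + b*d + c*e + d*a + e*b) = v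

lemma zmod2_lemma : ∀ a b c d e : ZMod 2,
    a*a + b*b + c*c + d*d + e*e - (a*b + b*c + c*d + d*e + e*a) = 0 →
    a*a + b*b + c*c + d*d + e*e - (a*c + b*d + c*e + d*a + e*b) = 0 →
    a = e ∧ b = e ∧ c = e ∧ d = e := by decide

lemma half_step {v : ℤ} (h : HasSol v) (hv : (2:ℤ) ∣ v) :
    ∃ w : ℤ, v = 4 * w ∧ HasSol w := by
  obtain ⟨a, b, c, d, e, h1, h2⟩ := h
  have hv0 : ((v : ℤ) : ZMod 2) = 0 := (ZMod.intCast_zmod_eq_zero_iff_dvd v 2).2 hv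
  have c1 : ((a:ZMod 2)*a + b*b + c*c + d*d + e*e - (a*b + b*c + c*d + d*e + e*a)) = 0 := by
    have := congrArg (fun z : ℤ => (z : ZMod 2)) h1
    push_cast at this
    rw [this, hv0]
  have c2 : ((a:ZMod 2)*a + b*b + c*c + d*d + e*e - (a*c + b*d + c*e + d*a + e*b)) = 0 := by
    have := congrArg (fun z : ℤ => (z : ZMod 2)) h2
    push_cast at this
    rw [this, hv0]
  obtain ⟨pa, pb, pc, pd⟩ := zmod2_lemma _ _ _ _ _ c1 c2
  have da : (2:ℤ) ∣ a - e := by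
    have : ((a - e : ℤ) : ZMod 2) = 0 := by push_cast; rw [pa]; ring
    exact (ZMod.intCast_zmod_eq_zero_iff_dvd _ 2).1 this
  have db : (2:ℤ) ∣ b - e := by
    have : ((b - e : ℤ) : ZMod 2) = 0 := by push_cast; rw [pb]; ring
    exact (ZMod.intCast_zmod_eq_zero_iff_dvd _ 2).1 this
  have dc : (2:ℤ) ∣ c - e := by
    have : ((c - e : ℤ) : ZMod 2) = 0 := by push_cast; rw [pc]; ring
    exact (ZMod.intCast_zmod_eq_zero_iff_dvd _ 2).1 this
  have dd : (2:ℤ) ∣ d - e := by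
    have : ((d - e : ℤ) : ZMod 2) = 0 := by push_cast; rw [pd]; ring
    exact (ZMod.intCast_zmod_eq_zero_iff_dvd _ 2).1 this
  obtain ⟨a', ha⟩ : ∃ y, a = 2*y + e := by obtain ⟨y, hy⟩ := da; exact ⟨y, by omega⟩
  obtain ⟨b', hb⟩ : ∃ y, b = 2*y + e := by obtain ⟨y, hy⟩ := db; exact ⟨y, by omega⟩
  obtain ⟨c', hc⟩ : ∃ y, c = 2*y + e := by obtain ⟨y, hy⟩ := dc; exact ⟨y, by omega⟩
  obtain ⟨d', hd⟩ : ∃ y, d = 2*y + e := by obtain ⟨y, hy⟩ := dd; exact ⟨y, by omega⟩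
  subst ha hb hc hd
  refine ⟨a'*a' + b'*b' + c'*c' + d'*d' + 0*0 - (a'*b' + b'*c' + c'*d' + d'*0 + 0*a'), ?_,
    a', b', c', d', 0, rfl, ?_⟩
  · linear_combination -h1
  · have h4 : (4:ℤ) * (a'*a' + b'*b' + c'*c' + d'*d' + 0*0 - (a'*c' + b'*d' + c'*0 + d'*a' + 0*b'))
        = 4 * (a'*a' + b'*b' + c'*c' + d'*d' + 0*0 - (a'*b' + b'*c' + c'*d' + d'*0 + 0*a')) := by
      linear_combination h2 - h1
    exact mul_left_cancel₀ (by norm_num) h4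

lemma no_sol_odd2adic : ∀ j : ℕ, ∀ v : ℤ, HasSol v → (2:ℤ)^(2*j+1) ∣ v → ¬ (2:ℤ)^(2*j+2) ∣ v → False := by
  intro j
  induction j with
  | zero =>
    intro v h hdvd hndvd
    obtain ⟨w, rfl, _⟩ := half_step h (by simpa using hdvd)
    exact hndvd ⟨w, by ring⟩
  | succ j ih =>
    intro v h hdvd hndvd
    have h2 : (2:ℤ) ∣ v := dvd_trans (dvd_pow_self 2 (by omega)) hdvd
    obtain ⟨w, rfl, hw⟩ := half_step h h2
    refine ih w hw ?_ ?_
    · obtain ⟨k, hk⟩ := hdvd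
      refine ⟨k, mul_left_cancel₀ (by norm_num : (4:ℤ) ≠ 0) ?_⟩
      rw [hk]; ring
    · intro ⟨k, hk⟩
      exact hndvd ⟨k, by rw [hk]; ring⟩

lemma sum_zmod_val (n : ℕ) [NeZero n] (f : ℕ → ℤ) :
    ∑ x : ZMod n, f x.val = ∑ i ∈ Finset.range n, f i := by
  rcases n with _ | m
  · exact absurd rfl (NeZero.ne 0)
  · exact Fin.sum_univ_eq_sum_range (fun i => f i) (m+1)

lemma main_count (n : ℕ) [NeZero n] (h5 : 5 ∣ n) (a : ℤ → ℤ)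
    (hbin : IsBinarySeq n a) (hauto : HasConstAutocorr n a 1) :
    ∃ N : ZMod 5 → ℤ,
      (∑ j : ZMod 5, N j * N j) - (∑ j : ZMod 5, N j * N (j+1)) = (n : ℤ) - 1 ∧
      (∑ j : ZMod 5, N j * N (j+1)) = (∑ j : ZMod 5, N j * N (j+2)) := by
  classical
  set φ : ZMod n →+* ZMod 5 := ZMod.castHom h5 (ZMod 5) with hφ
  set A : ZMod n → ℤ := fun x => a x.val with hA
  set Λ : ZMod n → ℤ := fun t => ∑ x : ZMod n, A x * A (x + t) with hΛ
  set M : ZMod 5 → ℤ := fun j => ∑ x ∈ Finset.univ.filter (fun x => φ x = j), A x with hM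
  set fib : ZMod 5 → Finset (ZMod n) := fun g => Finset.univ.filter (fun t => φ t = g) with hfib
  -- periodicity
  have hper : ∀ x t : ZMod n, A (x + t) = a ((x.val : ℤ) + (t.val : ℤ)) := by
    intro x t
    show a (((x + t).val : ℕ) : ℤ) = _
    rw [ZMod.val_add]
    have hx := ZMod.val_lt x; have ht := ZMod.val_lt t
    rcases Nat.lt_or_ge (x.val + t.val) n with h | h
    · rw [Nat.mod_eq_of_lt h]; push_cast; ring
    · have hmod : (x.val + t.val) % n = x.val + t.val - n := by
        rw [Nat.mod_eq_sub_mod h]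
        exact Nat.mod_eq_of_lt (by omega)
      rw [hmod]
      have e2 : (↑x.val + ↑t.val : ℤ) = ((x.val + t.val - n : ℕ) : ℤ) + (n : ℤ) := by omega
      rw [e2, hbin.2]
  -- autocorrelation values
  have hL0 : Λ 0 = (n : ℤ) := by
    rw [hΛ]
    have : ∀ x : ZMod n, A x * A (x + 0) = 1 := by
      intro x
      rw [add_zero]
      show a ↑x.val * a ↑x.val = 1
      rcases hbin.1 ((x.val : ℤ)) with h | h <;> rw [h] <;> norm_num
    simp only [this]
    simp [ZMod.card]
  have hLt : ∀ t : ZMod n, t ≠ 0 → Λ t = 1 := by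
    intro t ht
    have hvpos : 0 < t.val := by
      rcases Nat.eq_zero_or_pos t.val with h | h
      · exact absurd ((ZMod.val_eq_zero t).1 h) ht
      · exact h
    have hvlt := ZMod.val_lt t
    have : Λ t = autocorr n a t.val := by
      rw [hΛ, autocorr]
      have : ∀ x : ZMod n, A x * A (x + t) = a (x.val : ℤ) * a ((x.val : ℤ) + t.val) := by
        intro x; rw [hper x t]
      simp only [this]
      exact sum_zmod_val n (fun i => a i * a (i + t.val))
    rw [this]
    exact hauto t.val (by exact_mod_cast hvpos) (by push_cast; omega)
  -- fibers have equal cardinality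
  have hcard : ∀ g g' : ZMod 5, (fib g).card = (fib g').card := by
    intro g g'
    set d : ZMod n := ((g' - g).val : ZMod n) with hd
    have hφd : φ d = g' - g := by
      rw [hd, map_natCast]
      exact ZMod.natCast_rightInverse (g' - g)
    refine Finset.card_bij' (fun t _ => t + d) (fun s _ => s - d) ?_ ?_ ?_ ?_
    · intro t htm
      simp only [hfib, Finset.mem_filter, Finset.mem_univ, true_and] at htm ⊢
      rw [map_add, htm, hφd]; ring
    · intro s hsm
      simp only [hfib, Finset.mem_filter, Finset.mem_univ, true_and] at hsm ⊢
      rw [map_sub, hsm, hφd]; ring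
    · intro t _; ring
    · intro s _; ring
  -- the swap identity
  have hswap : ∀ g : ZMod 5, ∑ t ∈ fib g, Λ t = ∑ j : ZMod 5, M j * M (j + g) := by
    intro g
    calc ∑ t ∈ fib g, Λ t = ∑ t ∈ fib g, ∑ x : ZMod n, A x * A (x + t) := rfl
      _ = ∑ x : ZMod n, ∑ t ∈ fib g, A x * A (x + t) := Finset.sum_comm
      _ = ∑ x : ZMod n, A x * ∑ t ∈ fib g, A (x + t) := by
          refine Finset.sum_congr rfl fun x _ => ?_; rw [Finset.mul_sum]
      _ = ∑ x : ZMod n, A x * M (φ x + g) := by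
          refine Finset.sum_congr rfl fun x _ => ?_
          congr 1
          rw [hM]
          refine Finset.sum_bij' (fun t _ => x + t) (fun y _ => y - x) ?_ ?_ ?_ ?_ ?_
          · intro t htm
            simp only [hfib, Finset.mem_filter, Finset.mem_univ, true_and] at htm ⊢
            rw [map_add, htm]
          · intro y hym
            simp only [hfib, Finset.mem_filter, Finset.mem_univ, true_and] at hym ⊢
            rw [map_sub, hym]; ring
          · intro t _; ring
          · intro y _; ring
          · intro t _; rfl
      _ = ∑ j : ZMod 5, ∑ x ∈ Finset.univ.filter (fun x => φ x = j), A x * M (φ x + g) := by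
          rw [Finset.sum_fiberwise]
      _ = ∑ j : ZMod 5, M j * M (j + g) := by
          refine Finset.sum_congr rfl fun j _ => ?_
          rw [hM, Finset.sum_mul]
          refine Finset.sum_congr rfl fun x hx => ?_
          simp only [Finset.mem_filter] at hx
          rw [hx.2]
  -- fiber sums
  have h0fib : (0 : ZMod n) ∈ fib 0 := by simp [hfib, map_zero]
  have hT0 : ∑ t ∈ fib 0, Λ t = (n : ℤ) + ((fib 0).card : ℤ) - 1 := by
    rw [← Finset.add_sum_erase _ _ h0fib, hL0]
    have : ∑ t ∈ (fib 0).erase 0, Λ t = ∑ t ∈ (fib 0).erase 0, 1 := by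
      refine Finset.sum_congr rfl fun t htm => hLt t (Finset.ne_of_mem_erase htm)
    rw [this, Finset.sum_const, Finset.card_erase_of_mem h0fib]
    have hpos : 0 < (fib 0).card := Finset.card_pos.2 ⟨0, h0fib⟩
    simp only [nsmul_eq_mul, mul_one]
    omega
  have hTg : ∀ g : ZMod 5, g ≠ 0 → ∑ t ∈ fib g, Λ t = ((fib g).card : ℤ) := by
    intro g hg
    have : ∑ t ∈ fib g, Λ t = ∑ t ∈ fib g, 1 := by
      refine Finset.sum_congr rfl fun t htm => ?_
      refine hLt t fun h0 => hg ?_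
      simp only [hfib, Finset.mem_filter, Finset.mem_univ, true_and] at htm
      rw [← htm, h0, map_zero]
    rw [this, Finset.sum_const]; push_cast; ring
  refine ⟨M, ?_, ?_⟩
  · have e0 : ∑ j : ZMod 5, M j * M j = (n:ℤ) + ((fib 0).card : ℤ) - 1 := by
      rw [← hT0, hswap 0]
      refine Finset.sum_congr rfl fun j _ => by rw [add_zero]
    have e1 : ∑ j : ZMod 5, M j * M (j+1) = ((fib 1).card : ℤ) := by
      rw [← hTg 1 (by decide), hswap 1]
    rw [e0, e1, hcard 0 1]; ring
  · have e1 : ∑ j : ZMod 5, M j * M (j+1) = ((fib 1).card : ℤ) := by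
      rw [← hTg 1 (by decide), hswap 1]
    have e2 : ∑ j : ZMod 5, M j * M (j+2) = ((fib 2).card : ℤ) := by
      rw [← hTg 2 (by decide), hswap 2]
    rw [e1, e2, hcard 1 2]

lemma natDivHelper (u w : ℕ) (h2 : u^2+1 = 2*w) : (u^2+1)/2 = w := by omega

theorem stmt4 (u : ℕ) (hu : 3 ≤ u)
    (hmod : (u % 80 = 7 ∨ u % 80 = 23 ∨ u % 80 = 57 ∨ u % 80 = 73) ∨
            (u % 320 = 33 ∨ u % 320 = 97 ∨ u % 320 = 223 ∨ u % 320 = 287)) :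
    ¬ ∃ a : ℤ → ℤ, IsBinarySeq ((u ^ 2 + 1) / 2) a ∧
        HasConstAutocorr ((u ^ 2 + 1) / 2) a 1 := by
  have key : ((u^2+1)/2) % 5 = 0 ∧ (((u^2+1)/2) % 16 = 9 ∨ ((u^2+1)/2) % 64 = 33) := by
    rcases hmod with (h|h|h|h) | (h|h|h|h)
    · obtain ⟨q, rfl⟩ : ∃ q, u = 80*q + 7 := ⟨u/80, by omega⟩
      have hnn : ((80*q+7)^2+1)/2 = 3200*(q*q) + 560*q + 25 := natDivHelper _ _ (by ring)
      rw [hnn]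
      generalize q*q = Q
      omega
    · obtain ⟨q, rfl⟩ : ∃ q, u = 80*q + 23 := ⟨u/80, by omega⟩
      have hnn : ((80*q+23)^2+1)/2 = 3200*(q*q) + 1840*q + 265 := natDivHelper _ _ (by ring)
      rw [hnn]
      generalize q*q = Q
      omega
    · obtain ⟨q, rfl⟩ : ∃ q, u = 80*q + 57 := ⟨u/80, by omega⟩
      have hnn : ((80*q+57)^2+1)/2 = 3200*(q*q) + 4560*q + 1625 := natDivHelper _ _ (by ring)
      rw [hnn]
      generalize q*q = Q
      omega
    · obtain ⟨q, rfl⟩ : ∃ q, u = 80*q + 73 := ⟨u/80, by omega⟩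
      have hnn : ((80*q+73)^2+1)/2 = 3200*(q*q) + 5840*q + 2665 := natDivHelper _ _ (by ring)
      rw [hnn]
      generalize q*q = Q
      omega
    · obtain ⟨q, rfl⟩ : ∃ q, u = 320*q + 33 := ⟨u/320, by omega⟩
      have hnn : ((320*q+33)^2+1)/2 = 51200*(q*q) + 10560*q + 545 := natDivHelper _ _ (by ring)
      rw [hnn]
      generalize q*q = Q
      omega
    · obtain ⟨q, rfl⟩ : ∃ q, u = 320*q + 97 := ⟨u/320, by omega⟩
      have hnn : ((320*q+97)^2+1)/2 = 51200*(q*q) + 31040*q + 4705 := natDivHelper _ _ (by ring)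
      rw [hnn]
      generalize q*q = Q
      omega
    · obtain ⟨q, rfl⟩ : ∃ q, u = 320*q + 223 := ⟨u/320, by omega⟩
      have hnn : ((320*q+223)^2+1)/2 = 51200*(q*q) + 71360*q + 24865 := natDivHelper _ _ (by ring)
      rw [hnn]
      generalize q*q = Q
      omega
    · obtain ⟨q, rfl⟩ : ∃ q, u = 320*q + 287 := ⟨u/320, by omega⟩
      have hnn : ((320*q+287)^2+1)/2 = 51200*(q*q) + 91840*q + 41185 := natDivHelper _ _ (by ring)
      rw [hnn]
      generalize q*q = Q
      omega
  rintro ⟨a, hbin, hauto⟩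
  set n := (u^2+1)/2 with hn
  have h5 : 5 ∣ n := Nat.dvd_of_mod_eq_zero key.1
  haveI : NeZero n := ⟨by rcases key.2 with h|h <;> omega⟩
  obtain ⟨N, hE1, hE2⟩ := main_count n h5 a hbin hauto
  have S0 : (∑ j : ZMod 5, N j * N j) =
      N 0 * N 0 + N 1 * N 1 + N 2 * N 2 + N 3 * N 3 + N 4 * N 4 :=
    Fin.sum_univ_five (fun j : ZMod 5 => N j * N j)
  have S1 : (∑ j : ZMod 5, N j * N (j+1)) =
      N 0 * N 1 + N 1 * N 2 + N 2 * N 3 + N 3 * N 4 + N 4 * N 0 := by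
    have h : (∑ j : ZMod 5, N j * N (j+1)) =
        N 0 * N (0+1) + N 1 * N (1+1) + N 2 * N (2+1) + N 3 * N (3+1) + N 4 * N (4+1) :=
      Fin.sum_univ_five (fun j : ZMod 5 => N j * N (j+1))
    rw [h, show ((0:ZMod 5)+1) = 1 from by decide, show ((1:ZMod 5)+1) = 2 from by decide,
      show ((2:ZMod 5)+1) = 3 from by decide, show ((3:ZMod 5)+1) = 4 from by decide,
      show ((4:ZMod 5)+1) = 0 from by decide]
  have S2 : (∑ j : ZMod 5, N j * N (j+2)) =
      N 0 * N 2 + N 1 * N 3 + N 2 * N 4 + N 3 * N 0 + N 4 * N 1 := by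
    have h : (∑ j : ZMod 5, N j * N (j+2)) =
        N 0 * N (0+2) + N 1 * N (1+2) + N 2 * N (2+2) + N 3 * N (3+2) + N 4 * N (4+2) :=
      Fin.sum_univ_five (fun j : ZMod 5 => N j * N (j+2))
    rw [h, show ((0:ZMod 5)+2) = 2 from by decide, show ((1:ZMod 5)+2) = 3 from by decide,
      show ((2:ZMod 5)+2) = 4 from by decide, show ((3:ZMod 5)+2) = 0 from by decide,
      show ((4:ZMod 5)+2) = 1 from by decide]
  rw [S0, S1] at hE1
  rw [S1, S2] at hE2
  have hsol : HasSol ((n:ℤ) - 1) := ⟨N 0, N 1, N 2, N 3, N 4, by linarith, by linarith⟩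
  rcases key.2 with h|h
  · refine no_sol_odd2adic 1 ((n:ℤ)-1) hsol ?_ ?_
    · norm_num
      omega
    · norm_num
      omega
  · refine no_sol_odd2adic 2 ((n:ℤ)-1) hsol ?_ ?_
    · norm_num
      omega
    · norm_num
      omega
end

section
/- Let u ≥ 3 be an integer with u ≡ 7, 13, 23, 43, 47, 67, 77, or 83 (mod 90). Then there is no binary sequence of period (u²+1)/2 with all nontrivial autocorrelation values equal to 1. -/
set_option maxHeartbeats 1000000 in
lemma key9 : ∀ b1 b2 b3 b4 : ZMod 9,
    b1*b2+b2*b3+b3*b4 = b1*b3+b2*b4+b4*b1 →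
    (b1*b1+b2*b2+b3*b3+b4*b4) - (b1*b2+b2*b3+b3*b4) ≠ 3 ∧
    (b1*b1+b2*b2+b3*b3+b4*b4) - (b1*b2+b2*b3+b3*b4) ≠ 6 := by
  decide

lemma keyZ (B0 B1 B2 B3 B4 N M : ℤ)
    (hN : N % 9 = 7 ∨ N % 9 = 4)
    (h0 : B0*B0+B1*B1+B2*B2+B3*B3+B4*B4 = M + (N - 1))
    (h1 : B1*B0+B2*B1+B3*B2+B4*B3+B0*B4 = M)
    (h2 : B2*B0+B3*B1+B4*B2+B0*B3+B1*B4 = M) : False := by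
  have H0 := congrArg (fun x : ℤ => (x : ZMod 9)) h0
  have H1 := congrArg (fun x : ℤ => (x : ZMod 9)) h1
  have H2 := congrArg (fun x : ℤ => (x : ZMod 9)) h2
  push_cast at H0 H1 H2
  set c1 : ZMod 9 := (B1 : ZMod 9) - (B0 : ZMod 9) with hc1
  set c2 : ZMod 9 := (B2 : ZMod 9) - (B0 : ZMod 9) with hc2
  set c3 : ZMod 9 := (B3 : ZMod 9) - (B0 : ZMod 9) with hc3
  set c4 : ZMod 9 := (B4 : ZMod 9) - (B0 : ZMod 9) with hc4
  have hkey := key9 c1 c2 c3 c4 (by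
    rw [hc1, hc2, hc3, hc4]; linear_combination H1 - H2)
  rcases hN with hN | hN
  · obtain ⟨t, ht⟩ : ∃ t, N = 9*t + 7 := ⟨N / 9, by omega⟩
    have hN9 : ((N : ZMod 9)) = 7 := by
      rw [ht]; push_cast
      have : (9 : ZMod 9) = 0 := by decide
      rw [this]; ring
    rw [hN9] at H0
    exact hkey.2 (by rw [hc1, hc2, hc3, hc4]; linear_combination H0 - H1)
  · obtain ⟨t, ht⟩ : ∃ t, N = 9*t + 4 := ⟨N / 9, by omega⟩
    have hN9 : ((N : ZMod 9)) = 4 := by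
      rw [ht]; push_cast
      have : (9 : ZMod 9) = 0 := by decide
      rw [this]; ring
    rw [hN9] at H0
    exact hkey.1 (by rw [hc1, hc2, hc3, hc4]; linear_combination H0 - H1)

lemma sum_shift (n : ℕ) (H : ℤ → ℤ) (hH : ∀ x, H (x + (n : ℤ)) = H x) :
    ∀ i : ℕ, ∑ t ∈ Finset.range n, H ((i : ℤ) + t) = ∑ t ∈ Finset.range n, H t := by
  intro i
  induction i with
  | zero => simp
  | succ k ih =>
    rw [← ih]
    rcases n with _ | m
    · simp
    · rw [Finset.sum_range_succ (fun t : ℕ => H (((k+1 : ℕ) : ℤ) + t)) m,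
        Finset.sum_range_succ' (fun t : ℕ => H ((k : ℤ) + t)) m]
      congr 1
      · exact Finset.sum_congr rfl fun t _ => congrArg H (by push_cast; ring)
      · have h1 : ((k+1 : ℕ) : ℤ) + (m : ℕ) = (k : ℤ) + ((m+1 : ℕ) : ℤ) := by push_cast; ring
        rw [h1, hH (k : ℤ)]
        norm_num

lemma count5 (m d : ℕ) (hd : d < 5) :
    ∑ t ∈ Finset.range (5*m), (if t % 5 = d then (1:ℤ) else 0) = m := by
  induction m with
  | zero => simp
  | succ k ih =>
    have h5 : 5*(k+1) = 5*k+1+1+1+1+1 := by ring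
    rw [h5, Finset.sum_range_succ, Finset.sum_range_succ, Finset.sum_range_succ,
      Finset.sum_range_succ, Finset.sum_range_succ, ih]
    split_ifs <;> push_cast <;> omega

lemma groupC (n : ℕ) (a' g : ℕ → ℤ) :
    ∑ i ∈ Finset.range n, a' i * g (i % 5) =
      ∑ r ∈ Finset.range 5, g r * ∑ i ∈ Finset.range n, (if i % 5 = r then a' i else 0) := by
  have : ∀ r, g r * ∑ i ∈ Finset.range n, (if i % 5 = r then a' i else 0)
      = ∑ i ∈ Finset.range n, (if i % 5 = r then g r * a' i else 0) := by
    intro r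
    rw [Finset.mul_sum]
    exact Finset.sum_congr rfl fun i _ => by split_ifs <;> simp
  rw [Finset.sum_congr rfl fun r _ => this r, Finset.sum_comm]
  refine Finset.sum_congr rfl fun i _ => ?_
  rw [Finset.sum_ite_eq (Finset.range 5) (i % 5) (fun r => g r * a' i),
    if_pos (Finset.mem_range.mpr (Nat.mod_lt _ (by norm_num)))]
  ring

/-- sum of `a` over indices in `range n` congruent to `r` mod 5 -/
def bsum (n : ℕ) (a : ℤ → ℤ) (r : ℕ) : ℤ :=
  ∑ i ∈ Finset.range n, (if i % 5 = r then a i else 0)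

theorem stmt5 (u : ℕ) (hu : 3 ≤ u)
    (hmod : u % 90 = 7 ∨ u % 90 = 13 ∨ u % 90 = 23 ∨ u % 90 = 43 ∨
            u % 90 = 47 ∨ u % 90 = 67 ∨ u % 90 = 77 ∨ u % 90 = 83) :
    ¬ ∃ a : ℤ → ℤ, IsBinarySeq ((u ^ 2 + 1) / 2) a ∧
        HasConstAutocorr ((u ^ 2 + 1) / 2) a 1 := by
  rintro ⟨a, ⟨hval, hper⟩, hac⟩
  have hodd : u % 2 = 1 := by omega
  obtain ⟨v, hv⟩ : ∃ v, u = 2 * v + 1 := ⟨u / 2, by omega⟩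
  obtain ⟨w, hw⟩ : ∃ w, u ^ 2 = 2 * w + 1 := ⟨2*v^2+2*v, by rw [hv]; ring⟩
  obtain ⟨A, hA⟩ : ∃ A, u ^ 2 = 90 * A + (u % 90) ^ 2 := by
    refine ⟨90*(u/90)^2 + 2*(u/90)*(u % 90), ?_⟩
    conv_lhs => rw [show u = 90*(u/90) + u % 90 from by omega]
    ring
  rw [hw] at hA
  have hn : (u ^ 2 + 1) / 2 = w + 1 := by rw [hw]; omega
  rw [hn] at hper hac
  set n : ℕ := w + 1 with hndef
  have hn45 : n % 45 = 25 ∨ n % 45 = 40 := by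
    rcases hmod with h|h|h|h|h|h|h|h <;> rw [h] at hA <;> norm_num at hA <;> omega
  have hn9 : n % 9 = 7 ∨ n % 9 = 4 := by omega
  obtain ⟨m, hm⟩ : ∃ m, n = 5 * m := ⟨n / 5, by omega⟩
  have hnpos : 0 < n := by omega
  have hni5 : ((n : ℕ) : ℤ) % 5 = 0 := by omega
  -- basic autocorrelation values
  have hsq : ∀ i : ℤ, a i * a i = 1 := fun i => by rcases hval i with h | h <;> rw [h] <;> norm_num
  have hauto0 : autocorr n a 0 = n := by
    simp [autocorr, hsq]
  have hauto1 : ∀ t : ℕ, t < n → t ≠ 0 → autocorr n a t = 1 := by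
    intro t ht ht0
    exact hac t (by omega) (by omega)
  -- the main double-counting identity
  have main : ∀ d : ℕ, d < 5 →
      ∑ r ∈ Finset.range 5, bsum n a ((r + d) % 5) * bsum n a r =
      ∑ t ∈ Finset.range n, (if t % 5 = d then autocorr n a t else 0) := by
    intro d hd
    have step1 : ∀ t ∈ Finset.range n, (if t % 5 = d then autocorr n a t else 0) =
        ∑ i ∈ Finset.range n, (if t % 5 = d then a i * a (i + t) else 0) := by
      intro t _
      by_cases h : t % 5 = d
      · simp only [if_pos h, autocorr]
      · simp [if_neg h]
    rw [Finset.sum_congr rfl step1, Finset.sum_comm]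
    have inner : ∀ i ∈ Finset.range n,
        ∑ t ∈ Finset.range n, (if t % 5 = d then a i * a (i + t) else 0)
          = a i * bsum n a ((i + d) % 5) := by
      intro i _
      have hper5 : ∀ x : ℤ,
          (fun x : ℤ => if x % 5 = ((i:ℤ) + (d:ℤ)) % 5 then a x else 0) (x + (n : ℤ))
          = (fun x : ℤ => if x % 5 = ((i:ℤ) + (d:ℤ)) % 5 then a x else 0) x := by
        intro x
        simp only []
        rw [hper x]
        exact if_congr (by omega) rfl rfl
      have e1 : ∀ t ∈ Finset.range n, (if t % 5 = d then a i * a (i + t) else 0)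
          = a i * (if ((i:ℤ) + (t:ℤ)) % 5 = ((i:ℤ) + (d:ℤ)) % 5 then a ((i:ℤ) + (t:ℤ)) else 0) := by
        intro t _
        by_cases h : t % 5 = d
        · rw [if_pos h, if_pos (by omega)]
        · rw [if_neg h, if_neg (by omega), mul_zero]
      rw [Finset.sum_congr rfl e1, ← Finset.mul_sum]
      congr 1
      rw [sum_shift n (fun x : ℤ => if x % 5 = ((i:ℤ) + (d:ℤ)) % 5 then a x else 0) hper5 i]
      exact Finset.sum_congr rfl fun j _ => if_congr (by omega) rfl rfl
    rw [Finset.sum_congr rfl inner]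
    have e2 : ∀ i ∈ Finset.range n, a (i:ℕ) * bsum n a ((i + d) % 5)
        = a (i:ℕ) * (fun r => bsum n a ((r + d) % 5)) (i % 5) := by
      intro i _
      simp only []
      congr 2
      omega
    rw [Finset.sum_congr rfl e2, groupC n (fun i => a (i:ℕ)) (fun r => bsum n a ((r + d) % 5))]
    exact Finset.sum_congr rfl fun r _ => rfl
  -- evaluating the right-hand side
  have hcount : ∀ d : ℕ, d < 5 →
      ∑ t ∈ Finset.range n, (if t % 5 = d then (1:ℤ) else 0) = m := by
    intro d hd
    rw [hm]
    exact count5 m d hd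
  have hval1 : ∀ d : ℕ, d < 5 → d ≠ 0 →
      ∑ t ∈ Finset.range n, (if t % 5 = d then autocorr n a t else 0) = m := by
    intro d hd hd0
    rw [← hcount d hd]
    refine Finset.sum_congr rfl fun t ht => ?_
    by_cases h : t % 5 = d
    · rw [if_pos h, if_pos h, hauto1 t (Finset.mem_range.mp ht) (by omega)]
    · rw [if_neg h, if_neg h]
  have hval0 :
      ∑ t ∈ Finset.range n, (if t % 5 = 0 then autocorr n a t else 0) = m + ((n:ℤ) - 1) := by
    have key : ∀ t ∈ Finset.range n, (if t % 5 = 0 then autocorr n a t else 0)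
        = (if t % 5 = 0 then (1:ℤ) else 0) + (if t = 0 then (n:ℤ) - 1 else 0) := by
      intro t ht
      by_cases h0 : t = 0
      · subst h0
        norm_num [hauto0]
      · by_cases h : t % 5 = 0
        · rw [if_pos h, if_pos h, if_neg h0, hauto1 t (Finset.mem_range.mp ht) h0, add_zero]
        · rw [if_neg h, if_neg h, if_neg h0, add_zero]
    rw [Finset.sum_congr rfl key, Finset.sum_add_distrib, hcount 0 (by norm_num)]
    congr 1
    rw [Finset.sum_ite_eq' (Finset.range n) 0 (fun _ => (n:ℤ) - 1),
      if_pos (Finset.mem_range.mpr hnpos)]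
  -- assemble
  have E0 := main 0 (by norm_num)
  have E1 := main 1 (by norm_num)
  have E2 := main 2 (by norm_num)
  rw [hval0] at E0
  rw [hval1 1 (by norm_num) (by norm_num)] at E1
  rw [hval1 2 (by norm_num) (by norm_num)] at E2
  simp only [Finset.sum_range_succ, Finset.sum_range_zero, zero_add] at E0 E1 E2
  norm_num at E0 E1 E2
  exact keyZ (bsum n a 0) (bsum n a 1) (bsum n a 2) (bsum n a 3) (bsum n a 4) n m
    (by omega) (by linear_combination E0) (by linear_combination E1) (by linear_combination E2)
end

section
/- Let e be a prime with e ≡ 1 (mod 4), and let m be an odd integer with |m| ≥ 3 such that m is a quadratic non-residue modulo e. Then there exists an odd prime p such that v_p(m) is odd and p is semiprimitive modulo e. -/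
theorem stmt6 (e : ℕ) (he : e.Prime) (he4 : e % 4 = 1)
    (m : ℤ) (hodd : Odd m) (hm : 3 ≤ |m|) (hqnr : IsQNR m e) :
    ∃ p : ℕ, p.Prime ∧ Odd p ∧ Odd (padicValInt p m) ∧ Semiprimitive (p : ℤ) e := by

  haveI : Fact e.Prime := ⟨he⟩
  have he5 : 5 ≤ e := by have := he.two_le; omega
  set n : ℕ := m.natAbs with hn_def
  have hn0 : n ≠ 0 := by
    simp [hn_def, Int.natAbs_eq_zero]
    intro h; rw [h] at hm; simp at hm
  have hnodd : Odd n := Int.natAbs_odd.mpr hodd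
  have hmn : (m : ZMod e) = (n : ZMod e) ∨ (m : ZMod e) = -(n : ZMod e) := by
    rcases Int.natAbs_eq m with h | h
    · left; rw [h, hn_def, Int.cast_natCast]
    · right; rw [h, hn_def, Int.cast_neg, Int.cast_natCast]
  have hneg1 : IsSquare (-1 : ZMod e) := (ZMod.exists_sq_eq_neg_one_iff).2 (by omega)
  -- m is not a square in ZMod e
  have hmsq : ¬ IsSquare ((m : ℤ) : ZMod e) := by
    rintro ⟨y, hy⟩
    obtain ⟨x, rfl⟩ := ZMod.intCast_surjective (n := e) y
    exact hqnr.2 ⟨x, by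
      have : ((m : ℤ) : ZMod e) = ((x ^ 2 : ℤ) : ZMod e) := by push_cast; rw [hy]; ring
      exact (ZMod.intCast_eq_intCast_iff _ _ _).1 this⟩
  -- key: exists prime factor with odd exponent that is a nonsquare mod e
  obtain ⟨p, hpmem, hpodd, hpns⟩ :
      ∃ p ∈ n.primeFactors, Odd (n.factorization p) ∧ ¬ IsSquare ((p : ℕ) : ZMod e) := by
    by_contra hc
    push_neg at hc
    have hnsq : IsSquare ((n : ℕ) : ZMod e) := by
      have hfac : ((n : ℕ) : ZMod e) =
          ∏ p ∈ n.primeFactors, ((p : ZMod e)) ^ (n.factorization p) := by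
        conv_lhs => rw [← Nat.factorization_prod_pow_eq_self hn0]
        rw [Nat.prod_factorization_eq_prod_primeFactors]
        push_cast
        rfl
      rw [hfac]
      refine Finset.prod_induction _ IsSquare (fun a b => IsSquare.mul) IsSquare.one ?_
      intro p hp
      rcases Nat.even_or_odd (n.factorization p) with hev | hod
      · obtain ⟨k, hk⟩ := hev
        exact ⟨(p : ZMod e) ^ k, by rw [hk]; ring⟩
      · exact ((hc p hp hod).pow _)
    rcases hmn with h | h
    · exact hmsq (h ▸ hnsq)
    · refine hmsq ?_
      rw [h, ← neg_one_mul]; exact hneg1.mul hnsq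
  have hp : p.Prime := Nat.prime_of_mem_primeFactors hpmem
  have hpdvd : p ∣ n := Nat.dvd_of_mem_primeFactors hpmem
  refine ⟨p, hp, ?_, ?_, ?_⟩
  · refine hp.odd_of_ne_two fun h => ?_
    rw [h] at hpdvd
    exact (Nat.not_even_iff_odd.2 hnodd) ((even_iff_two_dvd).2 hpdvd)
  · have : padicValInt p m = n.factorization p := by
      rw [Nat.factorization_def n hp]; rfl
    rw [this]; exact hpodd
  · -- semiprimitive via Euler's criterion
    have hpne : ((p : ℕ) : ZMod e) ≠ 0 := fun h => hpns (h ▸ ⟨0, by ring⟩)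
    have heuler := (ZMod.euler_criterion e hpne).not.1 hpns
    have hferm : ((p : ℕ) : ZMod e) ^ (e - 1) = 1 := ZMod.pow_card_sub_one_eq_one hpne
    have hsq : (((p : ℕ) : ZMod e) ^ (e / 2)) * (((p : ℕ) : ZMod e) ^ (e / 2)) = 1 := by
      rw [← pow_add]
      have : e / 2 + e / 2 = e - 1 := by omega
      rw [this, hferm]
    have := mul_self_eq_one_iff.1 hsq
    have hneg : ((p : ℕ) : ZMod e) ^ (e / 2) = -1 := by tauto
    refine ⟨e / 2, by omega, ?_⟩
    have : (((p : ℤ) ^ (e / 2) : ℤ) : ZMod e) = ((-1 : ℤ) : ZMod e) := by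
      push_cast
      exact hneg
    exact (ZMod.intCast_eq_intCast_iff _ _ _).1 this
end

section
/- Let A ≥ 5 be an integer with A ≡ 3 (mod 24) or A ≡ 21 (mod 24). If there exists a prime p with p ≡ 2 (mod 3) such that v_p(A²-9) is odd, then there is no ((A²+3)/4, (A-1)(A-3)/8, (A-3)(A-5)/16) cyclic difference set in ℤ/((A²+3)/4)ℤ, and consequently there is no binary sequence of period (A²+3)/4 with all nontrivial autocorrelation values equal to 3. -/
lemma dvd_of_dvd_quadform (p : ℕ) (hp : p.Prime) (hp3 : p % 3 = 2) (a b : ℤ)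
    (h : (p : ℤ) ∣ a ^ 2 + a * b + b ^ 2) : (p : ℤ) ∣ a ∧ (p : ℤ) ∣ b := by
  haveI : Fact p.Prime := ⟨hp⟩
  have h0 : ((a : ZMod p) ^ 2 + (a : ZMod p) * b + (b : ZMod p) ^ 2) = 0 := by
    have := (ZMod.intCast_zmod_eq_zero_iff_dvd (a ^ 2 + a * b + b ^ 2) p).mpr h
    push_cast at this
    exact this
  have hb : (b : ZMod p) = 0 := by
    by_contra hb
    set x : ZMod p := (a : ZMod p) * (b : ZMod p)⁻¹ with hxdef
    have hb2 : (b : ZMod p) ^ 2 ≠ 0 := pow_ne_zero _ hb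
    have hxb : x * (b : ZMod p) = a := by
      rw [hxdef]
      field_simp
    have h1 : (x ^ 2 + x + 1) * (b : ZMod p) ^ 2 = 0 := by
      linear_combination (x * (b : ZMod p) + (a : ZMod p) + (b : ZMod p)) * hxb + h0
    have hx : x ^ 2 + x + 1 = 0 := (mul_eq_zero.mp h1).resolve_right hb2
    have hx3 : x ^ 3 = 1 := by linear_combination (x - 1) * hx
    have hxne : x ≠ 0 := by
      intro hx0
      rw [hx0] at hx3
      simp at hx3
    have hq : p - 1 = 3 * ((p - 1) / 3) + 1 := by
      have := hp.two_le
      omega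
    have hfer : x ^ (p - 1) = 1 := ZMod.pow_card_sub_one_eq_one hxne
    have hx1 : x = 1 := by
      have : x ^ (3 * ((p - 1) / 3) + 1) = 1 := by rw [← hq]; exact hfer
      rw [pow_add, pow_mul, hx3, one_pow, one_mul, pow_one] at this
      exact this
    rw [hx1] at hx
    have h3 : (3 : ZMod p) = 0 := by linear_combination hx
    have : (p : ℕ) ∣ 3 := by
      have := (ZMod.natCast_eq_zero_iff 3 p).mp (by exact_mod_cast h3)
      exact this
    rcases (Nat.prime_three.eq_one_or_self_of_dvd p this) with h1 | h3
    · exact hp.one_lt.ne' h1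
    · omega
  have ha : (a : ZMod p) = 0 := by
    have : (a : ZMod p) ^ 2 = 0 := by rw [hb] at h0; linear_combination h0
    exact pow_eq_zero_iff (n := 2) (by norm_num) |>.mp this
  exact ⟨(ZMod.intCast_zmod_eq_zero_iff_dvd a p).mp ha,
    (ZMod.intCast_zmod_eq_zero_iff_dvd b p).mp hb⟩

lemma even_padic_quadform (p : ℕ) (hp : p.Prime) (hp3 : p % 3 = 2) :
    ∀ N : ℕ, 0 < N → ∀ a b : ℤ, (N : ℤ) = a ^ 2 + a * b + b ^ 2 →
      Even (padicValNat p N) := by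
  haveI : Fact p.Prime := ⟨hp⟩
  intro N
  induction N using Nat.strong_induction_on with
  | _ N ih =>
    intro hN a b hab
    by_cases hdvd : p ∣ N
    · obtain ⟨ha, hb⟩ := dvd_of_dvd_quadform p hp hp3 a b (by rw [← hab]; exact_mod_cast hdvd)
      obtain ⟨a', rfl⟩ := ha
      obtain ⟨b', rfl⟩ := hb
      have hform : (N : ℤ) = (p : ℤ) ^ 2 * (a' ^ 2 + a' * b' + b' ^ 2) := by
        rw [hab]; ring
      set N' : ℕ := N / (p ^ 2) with hN'
      have hp2 : 0 < p ^ 2 := pow_pos hp.pos 2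
      have hdvd2 : p ^ 2 ∣ N := by
        have : ((p : ℤ) ^ 2 : ℤ) ∣ (N : ℤ) := ⟨_, hform⟩
        exact_mod_cast Int.ofNat_dvd.mp (by exact_mod_cast this)
      have hNeq : N = p ^ 2 * N' := (Nat.mul_div_cancel' hdvd2).symm
      have hN'pos : 0 < N' := by
        rcases Nat.eq_zero_or_pos N' with h0 | h0
        · rw [h0, mul_zero] at hNeq; omega
        · exact h0
      have hN'form : (N' : ℤ) = a' ^ 2 + a' * b' + b' ^ 2 := by
        have : ((p : ℤ) ^ 2) * (N' : ℤ) = ((p : ℤ) ^ 2) * (a' ^ 2 + a' * b' + b' ^ 2) := by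
          rw [← hform]; exact_mod_cast congrArg (Nat.cast : ℕ → ℤ) hNeq.symm
        have hpz : ((p : ℤ)) ≠ 0 := by exact_mod_cast hp.pos.ne'
        exact mul_left_cancel₀ (pow_ne_zero 2 hpz) this
      have hlt : N' < N := by
        have h2 : 2 ≤ p := hp.two_le
        have hp4 : 4 ≤ p ^ 2 := by nlinarith
        have := Nat.mul_le_mul_right N' hp4
        omega
      have := ih N' hlt hN'pos a' b' hN'form
      obtain ⟨m, hm⟩ := this
      rw [hNeq, padicValNat.mul (pow_ne_zero 2 hp.pos.ne') hN'pos.ne', padicValNat.prime_pow]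
      exact ⟨m + 1, by omega⟩
    · rw [padicValNat.eq_zero_of_not_dvd hdvd]
      exact Even.zero

lemma cds_quadform (n k lam : ℕ) (hn : 0 < n) (hn3 : 3 ∣ n)
    (D : Finset (ZMod n)) (hD : IsCDS n k lam D) :
    ∃ a b : ℤ, (k : ℤ) - lam = a ^ 2 + a * b + b ^ 2 := by
  haveI : NeZero n := ⟨hn.ne'⟩
  set φ : ZMod n →+* ZMod 3 := ZMod.castHom hn3 (ZMod 3) with hφ
  set F : ZMod 3 → Finset (ZMod n) :=
    fun r => Finset.univ.filter (fun g => φ g = r) with hF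
  set m : ℕ := (F 0).card with hm
  -- all fibers have the same cardinality
  have hsurj : ∀ r : ZMod 3, ∃ s : ZMod n, φ s = r := by
    intro r
    exact ⟨(r.val : ZMod n), by simp [hφ]⟩
  have hcardF : ∀ r : ZMod 3, (F r).card = m := by
    intro r
    obtain ⟨s, hs⟩ := hsurj r
    rw [hm]
    apply Finset.card_bij' (fun g _ => g - s) (fun g _ => g + s)
    · intro g hg
      simp only [hF, Finset.mem_filter, Finset.mem_univ, true_and] at hg ⊢
      rw [map_sub, hg, hs, sub_self]
    · intro g hg
      simp only [hF, Finset.mem_filter, Finset.mem_univ, true_and] at hg ⊢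
      rw [map_add, hg, hs, zero_add]
    · intro g _; ring
    · intro g _; ring
  have h0F : (0 : ZMod n) ∈ F 0 := by
    simp [hF]
  have hm1 : 1 ≤ m := by
    rw [hm]; exact Finset.card_pos.mpr ⟨0, h0F⟩
  set c : ZMod 3 → ℕ := fun j => (D.filter (fun x => φ x = j)).card with hc
  -- diagonal count
  have hdiag : ((D ×ˢ D).filter (fun q => q.1 - q.2 = (0 : ZMod n))).card = k := by
    rw [← hD.1]
    apply Finset.card_bij' (fun (q : ZMod n × ZMod n) _ => q.1) (fun x _ => (x, x))
    · intro q hq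
      simp only [Finset.mem_filter, Finset.mem_product] at hq
      exact hq.1.1
    · intro x hx
      simp only [Finset.mem_filter, Finset.mem_product]
      exact ⟨⟨hx, hx⟩, sub_self x⟩
    · intro q hq
      simp only [Finset.mem_filter, Finset.mem_product] at hq
      have : q.1 = q.2 := by
        have := hq.2; rwa [sub_eq_zero] at this
      exact Prod.ext rfl this
    · intro x _; rfl
  -- T_r as a sum over the fiber
  have hTfiber : ∀ r : ZMod 3,
      ((D ×ˢ D).filter (fun q => φ (q.1 - q.2) = r)).card
        = ∑ g ∈ F r, ((D ×ˢ D).filter (fun q => q.1 - q.2 = g)).card := by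
    intro r
    rw [Finset.card_eq_sum_card_fiberwise
      (f := fun q : ZMod n × ZMod n => q.1 - q.2) (t := F r)
      (fun q hq => by
        simp only [Finset.coe_filter, Set.mem_setOf_eq] at hq
        simp [hF, hq.2])]
    apply Finset.sum_congr rfl
    intro g hg
    simp only [hF, Finset.mem_filter, Finset.mem_univ, true_and] at hg
    congr 1
    rw [Finset.filter_filter]
    apply Finset.filter_congr
    intro q _
    constructor
    · rintro ⟨_, h2⟩; exact h2
    · intro h2; exact ⟨by rw [h2, hg], h2⟩
  -- T_0 = k + lam * (m - 1)
  have hT0 : ((D ×ˢ D).filter (fun q => φ (q.1 - q.2) = 0)).card + lam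
      = k + lam * m := by
    rw [hTfiber 0, ← Finset.add_sum_erase _ _ h0F, hdiag]
    have : ∀ g ∈ (F 0).erase 0, ((D ×ˢ D).filter (fun q => q.1 - q.2 = g)).card = lam := by
      intro g hg
      exact hD.2 g (Finset.ne_of_mem_erase hg)
    rw [Finset.sum_congr rfl this, Finset.sum_const, smul_eq_mul,
      Finset.card_erase_of_mem h0F, hcardF 0]
    zify [hm1]
    ring
  -- T_1 = lam * m
  have hT1 : ((D ×ˢ D).filter (fun q => φ (q.1 - q.2) = 1)).card = lam * m := by
    rw [hTfiber 1]
    have : ∀ g ∈ F 1, ((D ×ˢ D).filter (fun q => q.1 - q.2 = g)).card = lam := by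
      intro g hg
      simp only [hF, Finset.mem_filter, Finset.mem_univ, true_and] at hg
      apply hD.2
      intro h0
      rw [h0, map_zero] at hg
      exact one_ne_zero hg.symm
    rw [Finset.sum_congr rfl this, Finset.sum_const, smul_eq_mul, hcardF 1, mul_comm]
  -- T_0 in terms of the c j
  have hT0c : ((D ×ˢ D).filter (fun q => φ (q.1 - q.2) = 0)).card
      = ∑ j : ZMod 3, (c j) ^ 2 := by
    rw [Finset.card_eq_sum_card_fiberwise
      (f := fun q : ZMod n × ZMod n => φ q.1) (t := Finset.univ)
      (fun q _ => Finset.mem_univ _)]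
    apply Finset.sum_congr rfl
    intro j _
    have : ((D ×ˢ D).filter (fun q => φ (q.1 - q.2) = 0)).filter
        (fun q => φ q.1 = j)
        = (D.filter (fun x => φ x = j)) ×ˢ (D.filter (fun x => φ x = j)) := by
      ext ⟨x, y⟩
      simp only [Finset.mem_filter, Finset.mem_product, map_sub, sub_eq_zero]
      constructor
      · rintro ⟨⟨⟨hx, hy⟩, hxy⟩, hj⟩
        exact ⟨⟨hx, hj⟩, ⟨hy, by rw [← hxy, hj]⟩⟩
      · rintro ⟨⟨hx, hjx⟩, ⟨hy, hjy⟩⟩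
        exact ⟨⟨⟨hx, hy⟩, by rw [hjx, hjy]⟩, hjx⟩
    rw [this, Finset.card_product, hc, sq]
  -- T_1 in terms of the c j
  have hT1c : ((D ×ˢ D).filter (fun q => φ (q.1 - q.2) = 1)).card
      = ∑ j : ZMod 3, (c j) * (c (j - 1)) := by
    rw [Finset.card_eq_sum_card_fiberwise
      (f := fun q : ZMod n × ZMod n => φ q.1) (t := Finset.univ)
      (fun q _ => Finset.mem_univ _)]
    apply Finset.sum_congr rfl
    intro j _
    have : ((D ×ˢ D).filter (fun q => φ (q.1 - q.2) = 1)).filter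
        (fun q => φ q.1 = j)
        = (D.filter (fun x => φ x = j)) ×ˢ (D.filter (fun x => φ x = j - 1)) := by
      ext ⟨x, y⟩
      simp only [Finset.mem_filter, Finset.mem_product, map_sub]
      constructor
      · rintro ⟨⟨⟨hx, hy⟩, hxy⟩, hj⟩
        refine ⟨⟨hx, hj⟩, ⟨hy, ?_⟩⟩
        rw [hj] at hxy
        linear_combination -hxy
      · rintro ⟨⟨hx, hjx⟩, ⟨hy, hjy⟩⟩
        exact ⟨⟨⟨hx, hy⟩, by rw [hjx, hjy]; ring⟩, hjx⟩
    rw [this, Finset.card_product, hc]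
  -- expand the sums over ZMod 3
  have huniv : (Finset.univ : Finset (ZMod 3)) = {0, 1, 2} := by decide
  have hsum2 : ∑ j : ZMod 3, (c j) ^ 2 = c 0 ^ 2 + c 1 ^ 2 + c 2 ^ 2 := by
    rw [huniv, Finset.sum_insert (by decide), Finset.sum_insert (by decide),
      Finset.sum_singleton]
    ring
  have hsum1 : ∑ j : ZMod 3, (c j) * (c (j - 1))
      = c 0 * c 2 + c 1 * c 0 + c 2 * c 1 := by
    rw [huniv, Finset.sum_insert (by decide), Finset.sum_insert (by decide),
      Finset.sum_singleton]
    have h01 : (0 : ZMod 3) - 1 = 2 := by decide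
    have h11 : (1 : ZMod 3) - 1 = 0 := by decide
    have h21 : (2 : ZMod 3) - 1 = 1 := by decide
    rw [h01, h11, h21]
    ring
  -- put it together
  refine ⟨(c 0 : ℤ) - c 1, (c 1 : ℤ) - c 2, ?_⟩
  have e1 : (c 0 : ℤ) ^ 2 + (c 1 : ℤ) ^ 2 + (c 2 : ℤ) ^ 2 + lam = k + lam * m := by
    have := hT0
    rw [hT0c, hsum2] at this
    exact_mod_cast congrArg (Nat.cast : ℕ → ℤ) this
  have e2 : (c 0 : ℤ) * c 2 + (c 1 : ℤ) * c 0 + (c 2 : ℤ) * c 1 = lam * m := by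
    have := hT1
    rw [hT1c, hsum1] at this
    exact_mod_cast congrArg (Nat.cast : ℕ → ℤ) this
  have e3 : (k : ℤ) - lam = ((c 0 : ℤ) ^ 2 + (c 1 : ℤ) ^ 2 + (c 2 : ℤ) ^ 2)
      - ((c 0 : ℤ) * c 2 + (c 1 : ℤ) * c 0 + (c 2 : ℤ) * c 1) := by linarith
  rw [e3]
  ring

lemma seq_to_cds (n : ℕ) (hn : 1 < n) (a : ℤ → ℤ) (hbin : IsBinarySeq n a)
    (hauto : HasConstAutocorr n a 3) :
    ∃ k lam : ℕ, ∃ D : Finset (ZMod n),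
      IsCDS n k lam D ∧ 4 * (k : ℤ) = 4 * lam + n - 3 := by
  haveI : NeZero n := ⟨by omega⟩
  haveI : Fact (1 < n) := ⟨hn⟩
  -- full periodicity
  have hper : ∀ i j : ℤ, a (i + j * n) = a i := by
    intro i j
    induction j using Int.induction_on with
    | zero => simp
    | succ j ihj =>
      rw [show i + ((j : ℤ) + 1) * n = (i + j * n) + n by ring, hbin.2, ihj]
    | pred j ihj =>
      have h := hbin.2 (i + (-(j : ℤ) - 1) * n)
      rw [show (i + (-(j : ℤ) - 1) * n) + n = i + (-(j : ℤ)) * n by ring] at h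
      exact h.symm.trans ihj
  have hcast : ∀ i : ℤ, a ((i : ZMod n)).val = a i := by
    intro i
    have h1 : (((i : ZMod n)).val : ℤ) = i % n := ZMod.val_intCast i
    rw [h1, Int.emod_def, show i - n * (i / n) = i + (-(i / n)) * n by ring, hper]
  set D : Finset (ZMod n) := Finset.univ.filter (fun x => a (x.val) = 1) with hDdef
  set k : ℕ := D.card with hk
  -- card of ones in a window equals k
  have hP1 : ((Finset.range n).filter (fun i : ℕ => a (i : ℤ) = 1)).card = k := by
    rw [hk]
    apply Finset.card_bij' (fun (i : ℕ) _ => ((i : ZMod n)))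
      (fun (x : ZMod n) _ => x.val)
    · intro i hi
      simp only [Finset.mem_filter, Finset.mem_range] at hi
      simp only [hDdef, Finset.mem_filter, Finset.mem_univ, true_and]
      rw [ZMod.val_natCast, Nat.mod_eq_of_lt hi.1]
      exact_mod_cast hi.2
    · intro x hx
      simp only [hDdef, Finset.mem_filter, Finset.mem_univ, true_and] at hx
      simp only [Finset.mem_filter, Finset.mem_range]
      exact ⟨ZMod.val_lt x, hx⟩
    · intro i hi
      simp only [Finset.mem_filter, Finset.mem_range] at hi
      rw [ZMod.val_natCast, Nat.mod_eq_of_lt hi.1]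
    · intro x _
      simp [ZMod.natCast_val, ZMod.cast_id]
  have hP2 : ∀ t : ℤ, ((Finset.range n).filter (fun i : ℕ => a ((i : ℤ) + t) = 1)).card = k := by
    intro t
    rw [hk]
    apply Finset.card_bij' (fun (i : ℕ) _ => (((i : ℤ) + t : ℤ) : ZMod n))
      (fun (x : ZMod n) _ => (x - (t : ZMod n)).val)
    · intro i hi
      simp only [Finset.mem_filter, Finset.mem_range] at hi
      simp only [hDdef, Finset.mem_filter, Finset.mem_univ, true_and]
      rw [hcast]
      exact hi.2
    · intro x hx
      simp only [hDdef, Finset.mem_filter, Finset.mem_univ, true_and] at hx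
      simp only [Finset.mem_filter, Finset.mem_range]
      refine ⟨ZMod.val_lt _, ?_⟩
      have h2 : ((((x - (t : ZMod n)).val : ℤ) + t : ℤ) : ZMod n) = x := by
        push_cast
        simp [ZMod.natCast_val, ZMod.cast_id]
      rw [← hcast (((x - (t : ZMod n)).val : ℤ) + t), h2]
      exact hx
    · intro i hi
      simp only [Finset.mem_filter, Finset.mem_range] at hi
      have : (((i : ℤ) + t : ℤ) : ZMod n) - (t : ZMod n) = ((i : ℕ) : ZMod n) := by
        push_cast; ring
      rw [this, ZMod.val_natCast, Nat.mod_eq_of_lt hi.1]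
    · intro x _
      push_cast
      simp [ZMod.natCast_val, ZMod.cast_id]
  -- pair count equals the difference count
  have hcount : ∀ t : ℤ,
      ((D ×ˢ D).filter (fun q => q.1 - q.2 = ((t : ZMod n)))).card
        = ((Finset.range n).filter (fun i : ℕ => a (i : ℤ) = 1 ∧ a ((i : ℤ) + t) = 1)).card := by
    intro t
    symm
    apply Finset.card_bij' (fun (i : ℕ) _ => (((((i : ℤ) + t : ℤ) : ZMod n)), ((i : ZMod n))))
      (fun (q : ZMod n × ZMod n) _ => q.2.val)
    · intro i hi
      simp only [Finset.mem_filter, Finset.mem_range] at hi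
      simp only [hDdef, Finset.mem_filter, Finset.mem_univ, Finset.mem_product, true_and]
      refine ⟨⟨?_, ?_⟩, ?_⟩
      · rw [hcast]; exact hi.2.2
      · rw [ZMod.val_natCast, Nat.mod_eq_of_lt hi.1]; exact_mod_cast hi.2.1
      · push_cast; ring
    · intro q hq
      simp only [hDdef, Finset.mem_filter, Finset.mem_univ, Finset.mem_product, true_and] at hq
      simp only [Finset.mem_filter, Finset.mem_range]
      refine ⟨ZMod.val_lt _, ?_, ?_⟩
      · have : a ((q.2.val : ℤ)) = 1 := by
          rw [← hcast (q.2.val : ℤ)]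
          have : (((q.2.val : ℤ)) : ZMod n) = q.2 := by
            push_cast; simp [ZMod.natCast_val, ZMod.cast_id]
          rw [this]
          exact hq.1.2
        exact_mod_cast this
      · have h2 : ((((q.2.val : ℤ)) + t : ℤ) : ZMod n) = q.1 := by
          push_cast
          simp only [ZMod.natCast_val, ZMod.cast_id]
          have := hq.2
          linear_combination -this
        rw [← hcast (((q.2.val : ℤ)) + t), h2]
        exact hq.1.1
    · intro i hi
      simp only [Finset.mem_filter, Finset.mem_range] at hi
      rw [ZMod.val_natCast, Nat.mod_eq_of_lt hi.1]
    · intro q hq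
      simp only [hDdef, Finset.mem_filter, Finset.mem_univ, Finset.mem_product, true_and] at hq
      have h2 : (((q.2.val : ℤ) + t : ℤ) : ZMod n) = q.1 := by
        push_cast
        simp only [ZMod.natCast_val, ZMod.cast_id]
        linear_combination -hq.2
      refine Prod.ext h2 ?_
      simp [ZMod.natCast_val, ZMod.cast_id]
  -- the autocorrelation identity
  have hC : ∀ t : ℤ, autocorr n a t
      = (n : ℤ) - 4 * k + 4 * ((Finset.range n).filter
          (fun i : ℕ => a (i : ℤ) = 1 ∧ a ((i : ℤ) + t) = 1)).card := by
    intro t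
    have hpt : ∀ i : ℤ, a i * a (i + t)
        = 1 - 2 * (if a i = 1 then (1 : ℤ) else 0)
            - 2 * (if a (i + t) = 1 then (1 : ℤ) else 0)
            + 4 * (if (a i = 1 ∧ a (i + t) = 1) then (1 : ℤ) else 0) := by
      intro i
      rcases hbin.1 i with h1 | h1 <;> rcases hbin.1 (i + t) with h2 | h2 <;>
        simp [h1, h2] <;> norm_num
    unfold autocorr
    rw [Finset.sum_congr rfl (fun (i : ℕ) _ => hpt (i : ℤ))]
    rw [Finset.sum_add_distrib, Finset.sum_sub_distrib, Finset.sum_sub_distrib]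
    rw [Finset.sum_const, ← Finset.mul_sum, ← Finset.mul_sum, ← Finset.mul_sum]
    rw [Finset.sum_boole, Finset.sum_boole, Finset.sum_boole]
    rw [hP1, hP2 t, Finset.card_range]
    push_cast
    ring
  -- every nonzero difference count is determined
  have hcnt4 : ∀ g : ZMod n, g ≠ 0 →
      4 * (((D ×ˢ D).filter (fun q => q.1 - q.2 = g)).card : ℤ) = 3 - n + 4 * k := by
    intro g hg
    set t : ℤ := (g.val : ℤ) with ht
    have hgt : ((t : ZMod n)) = g := by
      rw [ht]; push_cast; simp [ZMod.natCast_val, ZMod.cast_id]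
    have h1t : 1 ≤ t := by
      rw [ht]
      have : g.val ≠ 0 := fun h => hg (by rwa [← ZMod.val_eq_zero])
      omega
    have htn : t ≤ (n : ℤ) - 1 := by
      rw [ht]
      have := ZMod.val_lt g
      omega
    have h3 := hauto t h1t htn
    rw [hC t] at h3
    rw [← hgt, hcount t]
    linarith
  set lam : ℕ := ((D ×ˢ D).filter (fun q => q.1 - q.2 = (1 : ZMod n))).card with hlam
  have hone : (1 : ZMod n) ≠ 0 := one_ne_zero
  have hlam4 : 4 * (lam : ℤ) = 3 - n + 4 * k := hcnt4 1 hone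
  refine ⟨k, lam, D, ⟨rfl, ?_⟩, by linarith⟩
  intro g hg
  have := hcnt4 g hg
  have : (((D ×ˢ D).filter (fun q => q.1 - q.2 = g)).card : ℤ) = lam := by linarith
  exact_mod_cast this


lemma final_aux (n K L M : ℕ) (hn : 1 < n) (hn3 : 3 ∣ n) (hM : 0 < M)
    (hKL : (K : ℤ) - L = M) (hnM : (n : ℤ) = 4 * M + 3)
    (p : ℕ) (hp : p.Prime) (hp3 : p % 3 = 2)
    (hodd : Odd (padicValNat p (16 * M))) :
    (¬ ∃ D : Finset (ZMod n), IsCDS n K L D) ∧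
      ¬ ∃ a : ℤ → ℤ, IsBinarySeq n a ∧ HasConstAutocorr n a 3 := by
  haveI : Fact p.Prime := ⟨hp⟩
  have key : ∀ a b : ℤ, (M : ℤ) = a ^ 2 + a * b + b ^ 2 → False := by
    intro a b hab
    have heven := even_padic_quadform p hp hp3 M hM a b hab
    have h16 : padicValNat p (16 * M) = padicValNat p 16 + padicValNat p M :=
      padicValNat.mul (by norm_num) hM.ne'
    have h16e : Even (padicValNat p 16) := by
      by_cases hp2 : p = 2
      · subst hp2
        rw [show (16 : ℕ) = 2 ^ 4 by norm_num, padicValNat.prime_pow]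
        exact ⟨2, rfl⟩
      · rw [padicValNat.eq_zero_of_not_dvd]
        · exact Even.zero
        · intro hdvd
          rw [show (16 : ℕ) = 2 ^ 4 by norm_num] at hdvd
          exact hp2 ((Nat.prime_dvd_prime_iff_eq hp Nat.prime_two).mp
            (hp.dvd_of_dvd_pow hdvd))
    obtain ⟨u, hu⟩ := heven
    obtain ⟨v, hv⟩ := h16e
    obtain ⟨w, hw⟩ := hodd
    omega
  constructor
  · rintro ⟨D, hD⟩
    obtain ⟨a, b, hab⟩ := cds_quadform n K L (by omega) hn3 D hD
    exact key a b (by rw [← hab]; linarith)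
  · rintro ⟨a, ha, hauto⟩
    obtain ⟨k0, lam0, D, hD, hrel⟩ := seq_to_cds n hn a ha hauto
    obtain ⟨x, y, hxy⟩ := cds_quadform n k0 lam0 (by omega) hn3 D hD
    exact key x y (by rw [← hxy]; linarith)

theorem stmt13 (A : ℕ) (hA : 5 ≤ A) (hmod : A % 24 = 3 ∨ A % 24 = 21)
    (h : ∃ p : ℕ, p.Prime ∧ p % 3 = 2 ∧ Odd (padicValNat p (A ^ 2 - 9))) :
    (¬ ∃ D : Finset (ZMod ((A ^ 2 + 3) / 4)),
        IsCDS ((A ^ 2 + 3) / 4) ((A - 1) * (A - 3) / 8) ((A - 3) * (A - 5) / 16) D) ∧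
    ¬ ∃ a : ℤ → ℤ, IsBinarySeq ((A ^ 2 + 3) / 4) a ∧
        HasConstAutocorr ((A ^ 2 + 3) / 4) a 3 := by
  obtain ⟨p, hp, hp3, hodd⟩ := h
  obtain ⟨j, hj⟩ : ∃ j, A = 24 * j + 27 ∨ A = 24 * j + 21 := ⟨(A - 21) / 24, by omega⟩
  obtain ⟨J, hJ⟩ : ∃ J, j * j = J := ⟨_, rfl⟩
  rcases hj with hj | hj
  · have hB : A ^ 2 = 576 * J + 1296 * j + 729 := by rw [hj, ← hJ]; ring
    have e1 : A - 1 = 24 * j + 26 := by omega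
    have e3 : A - 3 = 24 * j + 24 := by omega
    have e5 : A - 5 = 24 * j + 22 := by omega
    have hKK : (A - 1) * (A - 3) = 8 * (72 * J + 150 * j + 78) := by
      rw [e1, e3, ← hJ]; ring
    have hLL : (A - 3) * (A - 5) = 16 * (36 * J + 69 * j + 33) := by
      rw [e3, e5, ← hJ]; ring
    have hK : (A - 1) * (A - 3) / 8 = 72 * J + 150 * j + 78 := by omega
    have hL : (A - 3) * (A - 5) / 16 = 36 * J + 69 * j + 33 := by omega
    have hMval : A ^ 2 - 9 = 16 * (36 * J + 81 * j + 45) := by omega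
    have hnval : (A ^ 2 + 3) / 4 = 144 * J + 324 * j + 183 := by omega
    rw [hnval, hK, hL]
    rw [hMval] at hodd
    exact final_aux _ _ _ _ (by omega) (by omega) (by omega)
      (by push_cast; ring) (by push_cast; ring) p hp hp3 hodd
  · have hB : A ^ 2 = 576 * J + 1008 * j + 441 := by rw [hj, ← hJ]; ring
    have e1 : A - 1 = 24 * j + 20 := by omega
    have e3 : A - 3 = 24 * j + 18 := by omega
    have e5 : A - 5 = 24 * j + 16 := by omega
    have hKK : (A - 1) * (A - 3) = 8 * (72 * J + 114 * j + 45) := by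
      rw [e1, e3, ← hJ]; ring
    have hLL : (A - 3) * (A - 5) = 16 * (36 * J + 51 * j + 18) := by
      rw [e3, e5, ← hJ]; ring
    have hK : (A - 1) * (A - 3) / 8 = 72 * J + 114 * j + 45 := by omega
    have hL : (A - 3) * (A - 5) / 16 = 36 * J + 51 * j + 18 := by omega
    have hMval : A ^ 2 - 9 = 16 * (36 * J + 63 * j + 27) := by omega
    have hnval : (A ^ 2 + 3) / 4 = 144 * J + 252 * j + 111 := by omega
    rw [hnval, hK, hL]
    rw [hMval] at hodd
    exact final_aux _ _ _ _ (by omega) (by omega) (by omega)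
      (by push_cast; ring) (by push_cast; ring) p hp hp3 hodd
end

section
/- Let A be a positive integer with A ≡ 27, 45, 51, or 69 (mod 72). Then there is no binary sequence of period (A²+3)/4 with all nontrivial autocorrelation values equal to 3. -/
/-- The form `x² + xy + y²` is anisotropic modulo a prime `q ≡ 2 (mod 3)`. -/
lemma s15_aniso (q : ℕ) (hq : q.Prime) (h2 : q % 3 = 2) (u v : ℤ)
    (h : (q:ℤ) ∣ u^2 + u*v + v^2) : (q:ℤ) ∣ u ∧ (q:ℤ) ∣ v := by
  haveI : Fact q.Prime := ⟨hq⟩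
  have hz : ((u^2 + u*v + v^2 : ℤ) : ZMod q) = 0 :=
    (ZMod.intCast_zmod_eq_zero_iff_dvd _ _).mpr h
  push_cast at hz
  set x := (u : ZMod q) with hx
  set y := (v : ZMod q) with hy
  have hy0 : y = 0 := by
    by_contra hy0
    have hz3 : ∃ z : ZMod q, z^2 + z + 1 = 0 := by
      refine ⟨x * y⁻¹, ?_⟩
      have hy1 : y⁻¹ * y = 1 := inv_mul_cancel₀ hy0
      have e : ((x*y⁻¹)^2 + (x*y⁻¹) + 1) * y^2 = x^2 + x*y + y^2 := by
        linear_combination (x^2*(y⁻¹*y+1) + x*y) * hy1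
      have e0 : ((x*y⁻¹)^2 + (x*y⁻¹) + 1) * y^2 = 0 := by rw [e, hz]
      rcases mul_eq_zero.mp e0 with h' | h'
      · exact h'
      · exact absurd (pow_eq_zero_iff (by norm_num : (2:ℕ) ≠ 0) |>.mp h') hy0
    obtain ⟨z, hz3⟩ := hz3
    have hzne1 : z ≠ 1 := by
      intro h1
      rw [h1] at hz3
      have h3 : ((3:ℕ) : ZMod q) = 0 := by push_cast; linear_combination hz3
      have h3' := (ZMod.natCast_eq_zero_iff 3 q).mp h3
      have := (Nat.prime_dvd_prime_iff_eq hq Nat.prime_three).mp h3'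
      omega
    have hzcube : z^3 = 1 := by linear_combination (z - 1) * hz3
    have hz0 : z ≠ 0 := by
      intro h0; rw [h0] at hzcube; simp at hzcube
    have hord : orderOf z = 3 := by
      have hdvd : orderOf z ∣ 3 := orderOf_dvd_of_pow_eq_one hzcube
      rcases (Nat.dvd_prime Nat.prime_three).mp hdvd with h1 | h3
      · exact absurd (orderOf_eq_one_iff.mp h1) hzne1
      · exact h3
    have hferm : z ^ (q - 1) = 1 := ZMod.pow_card_sub_one_eq_one hz0
    have hdvd2 : orderOf z ∣ q - 1 := orderOf_dvd_of_pow_eq_one hferm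
    rw [hord] at hdvd2
    have hq2 : 2 ≤ q := hq.two_le
    omega
  have hx0 : x = 0 := by
    rw [hy0] at hz
    have : x ^ 2 = 0 := by linear_combination hz
    exact pow_eq_zero_iff (n := 2) (by norm_num) |>.mp this
  exact ⟨(ZMod.intCast_zmod_eq_zero_iff_dvd _ _).mp hx0,
    (ZMod.intCast_zmod_eq_zero_iff_dvd _ _).mp hy0⟩

/-- In any number represented by `x² + xy + y²`, primes `≡ 2 (mod 3)` occur to even powers. -/
lemma s15_evenval : ∀ N : ℕ, ∀ u v : ℤ, (N:ℤ) = u^2 + u*v + v^2 →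
    ∀ q : ℕ, q.Prime → q % 3 = 2 → Even (N.factorization q) := by
  intro N
  induction N using Nat.strong_induction_on with
  | _ N ih =>
    intro u v hN q hq h2
    by_cases h0 : N = 0
    · subst h0; simp
    by_cases hdvd : q ∣ N
    · have hdq : (q:ℤ) ∣ u^2 + u*v + v^2 := hN ▸ Int.natCast_dvd_natCast.mpr hdvd
      obtain ⟨hqu, hqv⟩ := s15_aniso q hq h2 u v hdq
      obtain ⟨u1, rfl⟩ := hqu
      obtain ⟨v1, rfl⟩ := hqv
      have hq2 : (q:ℤ)^2 ∣ (N:ℤ) := ⟨u1^2 + u1*v1 + v1^2, by rw [hN]; ring⟩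
      have hq2' : q^2 ∣ N := by
        have h' : ((q^2 : ℕ) : ℤ) ∣ (N:ℤ) := by push_cast; exact hq2
        exact Int.natCast_dvd_natCast.mp h'
      obtain ⟨N1, hN1⟩ := hq2'
      have hqpos : 0 < q := hq.pos
      have hq1 : 2 ≤ q := hq.two_le
      have hN1ne : N1 ≠ 0 := by rintro rfl; simp at hN1; omega
      have hN1val : (N1:ℤ) = u1^2 + u1*v1 + v1^2 := by
        have hcast : ((q:ℤ))^2 * (N1:ℤ) = ((q:ℤ))^2 * (u1^2 + u1*v1 + v1^2) := by
          rw [show ((q:ℤ))^2 * (N1:ℤ) = ((N:ℕ):ℤ) by push_cast [hN1]; ring, hN]; ring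
        exact mul_left_cancel₀ (by positivity) hcast
      have hlt : N1 < N := by
        have hn1pos : 0 < N1 := Nat.pos_of_ne_zero hN1ne
        have h4 : 4 ≤ q^2 := by nlinarith
        have : 1 * N1 < q^2 * N1 := (Nat.mul_lt_mul_right hn1pos).mpr (by omega)
        omega
      have ihe := ih N1 hlt u1 v1 hN1val q hq h2
      have hfac : N.factorization q = 2 + N1.factorization q := by
        rw [hN1, Nat.factorization_mul (pow_ne_zero 2 hq.ne_zero) hN1ne]
        simp [hq.factorization_pow]
      rw [hfac]
      rcases ihe with ⟨k, hk⟩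
      exact ⟨k + 1, by omega⟩
    · rw [Nat.factorization_eq_zero_of_not_dvd hdvd]; exact Even.zero

/-- A positive integer prime to 3 all of whose prime factors `≡ 2 (mod 3)` occur to
even powers is `≡ 1 (mod 3)`. -/
lemma s15_modthree : ∀ w : ℕ, 0 < w → ¬ (3 ∣ w) →
    (∀ q : ℕ, q.Prime → q % 3 = 2 → Even (w.factorization q)) → w % 3 = 1 := by
  intro w
  induction w using Nat.strong_induction_on with
  | _ w ih =>
    intro hw h3 hev
    rcases Nat.lt_or_ge w 2 with hw1 | hw1
    · have : w = 1 := by omega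
      subst this; rfl
    have hp : w.minFac.Prime := Nat.minFac_prime (by omega)
    have hpd : w.minFac ∣ w := Nat.minFac_dvd w
    set p := w.minFac with hpdef
    have hp3 : p ≠ 3 := by intro h; apply h3; rw [← h]; exact hpd
    have hp3' : ¬ (3 ∣ p) := fun h =>
      hp3 ((Nat.prime_dvd_prime_iff_eq Nat.prime_three hp).mp h).symm
    have hp2 : 2 ≤ p := hp.two_le
    rcases (by omega : p % 3 = 1 ∨ p % 3 = 2) with hm1 | hm2
    · obtain ⟨w', hw'⟩ := hpd
      have hw'ne : w' ≠ 0 := by rintro rfl; simp at hw'; omega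
      have hw'lt : w' < w := by
        have h0 : 0 < w' := Nat.pos_of_ne_zero hw'ne
        have : 1 * w' < p * w' := (Nat.mul_lt_mul_right h0).mpr (by omega)
        omega
      have h3' : ¬ (3 ∣ w') := fun h => h3 (hw' ▸ Dvd.dvd.mul_left h p)
      have hev' : ∀ q : ℕ, q.Prime → q % 3 = 2 → Even (w'.factorization q) := by
        intro q hq hq2
        have hqp : q ≠ p := by intro h; rw [h] at hq2; omega
        have := hev q hq hq2
        rw [hw', Nat.factorization_mul hp.ne_zero hw'ne] at this
        simpa [hp.factorization, Finsupp.single_apply, hqp.symm] using this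
      have := ih w' hw'lt (Nat.pos_of_ne_zero hw'ne) h3' hev'
      rw [hw', Nat.mul_mod, hm1, this]
    · have heven := hev p hp hm2
      have hge1 : 1 ≤ w.factorization p := by
        rw [← hp.pow_dvd_iff_le_factorization (by omega)]
        simpa using hpd
      have hge2 : 2 ≤ w.factorization p := by
        rcases heven with ⟨k, hk⟩; omega
      have hp2d : p^2 ∣ w := (hp.pow_dvd_iff_le_factorization (by omega)).mpr hge2
      obtain ⟨w', hw'⟩ := hp2d
      have hw'ne : w' ≠ 0 := by rintro rfl; simp at hw'; omega
      have hw'lt : w' < w := by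
        have h0 : 0 < w' := Nat.pos_of_ne_zero hw'ne
        have hp4 : 4 ≤ p^2 := by nlinarith
        have : 1 * w' < p^2 * w' := (Nat.mul_lt_mul_right h0).mpr (by omega)
        omega
      have h3' : ¬ (3 ∣ w') := fun h => h3 (hw' ▸ Dvd.dvd.mul_left h (p^2))
      have hev' : ∀ q : ℕ, q.Prime → q % 3 = 2 → Even (w'.factorization q) := by
        intro q hq hq2
        have := hev q hq hq2
        rw [hw', Nat.factorization_mul (pow_ne_zero 2 hp.ne_zero) hw'ne] at this
        rcases eq_or_ne q p with rfl | hqp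
        · rw [hp.factorization_pow] at this
          simpa [Finsupp.single_apply, Nat.even_add] using this
        · rw [hp.factorization_pow] at this
          simpa [Finsupp.single_apply, hqp.symm] using this
      have := ih w' hw'lt (Nat.pos_of_ne_zero hw'ne) h3' hev'
      have hpsq : p^2 % 3 = 1 := by
        rw [Nat.pow_mod, hm2]
      rw [hw', Nat.mul_mod, hpsq, this]

lemma s15_step_rot (n : ℕ) (G : ℕ → ℤ) :
    ∑ t ∈ Finset.range n, G ((1 + t) % n) = ∑ t ∈ Finset.range n, G t := by
  cases n with
  | zero => simp
  | succ k =>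
    rw [Finset.sum_range_succ]
    have h1 : (1 + k) % (k+1) = 0 := by
      rw [Nat.add_comm]; exact Nat.mod_self (k+1)
    rw [h1]
    have h2 : ∀ t ∈ Finset.range k, G ((1 + t) % (k+1)) = G (t+1) := by
      intro t ht
      rw [Finset.mem_range] at ht
      congr 1
      rw [Nat.mod_eq_of_lt (by omega)]
      omega
    rw [Finset.sum_congr rfl h2]
    exact (Finset.sum_range_succ' G k).symm

lemma s15_rot (n : ℕ) (F : ℕ → ℤ) (i : ℕ) :
    ∑ t ∈ Finset.range n, F ((i + t) % n) = ∑ t ∈ Finset.range n, F (t % n) := by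
  induction i with
  | zero => simp
  | succ i ih =>
    have key : ∀ t ∈ Finset.range n, F ((i + 1 + t) % n) =
        (fun x => F ((i + x) % n)) ((1 + t) % n) := by
      intro t ht
      simp only []
      congr 1
      have h := (Nat.mod_modEq (1 + t) n).add_left i
      calc (i + 1 + t) % n = (i + (1 + t)) % n := by ring_nf
        _ = (i + (1 + t) % n) % n := h.symm
    rw [Finset.sum_congr rfl key, s15_step_rot n (fun x => F ((i + x) % n))]
    exact ih

lemma s15_cardlem (τ : ℕ) (hτ : τ < 3) (k : ℕ) :
    ((Finset.range (3*k)).filter (fun t => t % 3 = τ)).card = k := by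
  induction k with
  | zero => simp
  | succ k ih =>
    have h3 : 3*(k+1) = (3*k + 1 + 1) + 1 := by ring
    rw [h3, Finset.range_add_one, Finset.range_add_one, Finset.range_add_one,
        Finset.filter_insert, Finset.filter_insert, Finset.filter_insert]
    have nm : ∀ j, 3*k ≤ j → j ∉ (Finset.range (3*k)).filter (fun t => t % 3 = τ) := by
      intro j hj hmem
      rw [Finset.mem_filter, Finset.mem_range] at hmem
      omega
    interval_cases τ
    · rw [if_neg (by omega), if_neg (by omega), if_pos (by omega)]
      rw [Finset.card_insert_of_notMem (nm _ (by omega)), ih]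
    · rw [if_neg (by omega), if_pos (by omega), if_neg (by omega)]
      rw [Finset.card_insert_of_notMem (nm _ (by omega)), ih]
    · rw [if_pos (by omega), if_neg (by omega), if_neg (by omega)]
      rw [Finset.card_insert_of_notMem (nm _ (by omega)), ih]

lemma s15_keyid (n : ℕ) (a : ℤ → ℤ)
    (per : ∀ (x : ℤ) (k : ℕ), a (x + k * n) = a x)
    (hd3 : 3 ∣ n) (τ : ℕ) (hτ : τ < 3) :
    ∑ t ∈ (Finset.range n).filter (fun t => t % 3 = τ), autocorr n a t =
      ∑ c ∈ Finset.range 3,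
        (∑ i ∈ (Finset.range n).filter (fun i => i % 3 = c), a i) *
        (∑ j ∈ (Finset.range n).filter (fun j => j % 3 = (c + τ) % 3), a j) := by
  set S : ℕ → ℤ := fun c => ∑ i ∈ (Finset.range n).filter (fun i => i % 3 = c), a i with hS
  have hin : ∀ i ∈ Finset.range n,
      ∑ t ∈ (Finset.range n).filter (fun t => t % 3 = τ), a (↑i + ↑t) = S ((i + τ) % 3) := by
    intro i hi
    rw [Finset.sum_filter]
    have hpt : ∀ t ∈ Finset.range n,
        (if t % 3 = τ then a (↑i + ↑t) else 0) =
        (fun j => if j % 3 = (i + τ) % 3 then a (↑j) else 0) ((i + t) % n) := by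
      intro t ht
      simp only []
      have hmod : ((i + t) % n) % 3 = (i + t) % 3 := Nat.mod_mod_of_dvd _ hd3
      have hval : a (↑i + ↑t) = a (↑((i + t) % n)) := by
        have hnat : i + t = (i + t) % n + ((i + t) / n) * n :=
          (Nat.mod_add_div' (i + t) n).symm
        have : (↑i + ↑t : ℤ) = ↑((i + t) % n) + ↑((i + t) / n) * ↑n := by
          calc (↑i + ↑t : ℤ) = ((i + t : ℕ) : ℤ) := by push_cast; ring
            _ = (((i + t) % n + ((i + t) / n) * n : ℕ) : ℤ) := by rw [← hnat]
            _ = ↑((i + t) % n) + ↑((i + t) / n) * ↑n := by push_cast; ring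
        rw [this, per]
      by_cases hc : t % 3 = τ
      · rw [if_pos hc, if_pos (by omega), hval]
      · rw [if_neg hc, if_neg (by omega)]
    rw [Finset.sum_congr rfl hpt,
      s15_rot n (fun j => if j % 3 = (i + τ) % 3 then a (↑j) else 0) i]
    have : ∀ t ∈ Finset.range n,
        (fun j => if j % 3 = (i + τ) % 3 then a (↑j) else 0) (t % n) =
        (if t % 3 = (i + τ) % 3 then a (↑t) else 0) := by
      intro t ht
      rw [Finset.mem_range] at ht
      simp only [Nat.mod_eq_of_lt ht]
    rw [Finset.sum_congr rfl this, ← Finset.sum_filter]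
  calc ∑ t ∈ (Finset.range n).filter (fun t => t % 3 = τ), autocorr n a t
      = ∑ t ∈ (Finset.range n).filter (fun t => t % 3 = τ),
          ∑ i ∈ Finset.range n, a ↑i * a (↑i + ↑t) := rfl
    _ = ∑ i ∈ Finset.range n, ∑ t ∈ (Finset.range n).filter (fun t => t % 3 = τ),
          a ↑i * a (↑i + ↑t) := Finset.sum_comm
    _ = ∑ i ∈ Finset.range n, a ↑i * S ((i + τ) % 3) := by
        refine Finset.sum_congr rfl fun i hi => ?_
        rw [← Finset.mul_sum, hin i hi]
    _ = ∑ c ∈ Finset.range 3, ∑ i ∈ (Finset.range n).filter (fun i => i % 3 = c),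
          a ↑i * S ((i + τ) % 3) :=
        (Finset.sum_fiberwise_of_maps_to
          (fun i _ => Finset.mem_range.mpr (Nat.mod_lt i (by omega))) _).symm
    _ = ∑ c ∈ Finset.range 3, S c * S ((c + τ) % 3) := by
        refine Finset.sum_congr rfl fun c hc => ?_
        have : ∀ i ∈ (Finset.range n).filter (fun i => i % 3 = c),
            a ↑i * S ((i + τ) % 3) = a ↑i * S ((c + τ) % 3) := by
          intro i hi
          rw [Finset.mem_filter] at hi
          congr 2
          omega
        rw [Finset.sum_congr rfl this, ← Finset.sum_mul]

theorem stmt15 (A : ℕ) (hA : 0 < A)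
    (hmod : A % 72 = 27 ∨ A % 72 = 45 ∨ A % 72 = 51 ∨ A % 72 = 69) :
    ¬ ∃ a : ℤ → ℤ, IsBinarySeq ((A ^ 2 + 3) / 4) a ∧
        HasConstAutocorr ((A ^ 2 + 3) / 4) a 3 := by
  rintro ⟨a, ⟨h1, h2⟩, hC⟩
  -- arithmetic setup
  set m := A / 6 with hmdef
  have hA6 : A = 6*m + 3 := by omega
  have hm4 : 4 ≤ m := by omega
  have hm3 : m % 3 = 1 ∨ m % 3 = 2 := by omega
  set P := 3*m^2 + 3*m + 1 with hPdef
  set n := (A ^ 2 + 3) / 4 with hndef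
  have hsq : A^2 = 36*m^2 + 36*m + 9 := by rw [hA6]; ring
  have hn : n = 3*P := by rw [hndef, hsq, hPdef]; omega
  have hnpos : 0 < n := by omega
  have hd3 : 3 ∣ n := ⟨P, hn⟩
  -- periodicity
  have per : ∀ (x : ℤ) (k : ℕ), a (x + k * n) = a x := by
    intro x k
    induction k with
    | zero => simp
    | succ k ih =>
      have : x + (↑(k+1)) * n = (x + k * n) + n := by push_cast; ring
      rw [this, h2, ih]
  set S : ℕ → ℤ := fun c => ∑ i ∈ (Finset.range n).filter (fun i => i % 3 = c), a i with hS
  -- autocorrelation at 0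
  have hC0 : autocorr n a ((0:ℕ):ℤ) = (n:ℤ) := by
    rw [autocorr]
    have : ∀ i ∈ Finset.range n, a ↑i * a (↑i + ((0:ℕ):ℤ)) = 1 := by
      intro i hi
      push_cast
      rw [add_zero]
      rcases h1 ↑i with h | h <;> rw [h] <;> norm_num
    rw [Finset.sum_congr rfl this, Finset.sum_const, Finset.card_range]
    simp
  -- the three sums
  have hcard : ∀ τ : ℕ, τ < 3 →
      ((Finset.range n).filter (fun t => t % 3 = τ)).card = P := by
    intro τ hτ
    rw [hn]
    exact s15_cardlem τ hτ P
  have hT0 : ∑ t ∈ (Finset.range n).filter (fun t => t % 3 = 0), autocorr n a t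
      = 3*(P:ℤ) - 3 + n := by
    have h0mem : 0 ∈ (Finset.range n).filter (fun t => t % 3 = 0) := by
      rw [Finset.mem_filter, Finset.mem_range]; omega
    rw [← Finset.sum_erase_add _ _ h0mem]
    have herase : ∀ t ∈ ((Finset.range n).filter (fun t => t % 3 = 0)).erase 0,
        autocorr n a t = 3 := by
      intro t ht
      rw [Finset.mem_erase, Finset.mem_filter, Finset.mem_range] at ht
      refine hC ↑t ?_ ?_
      · exact_mod_cast Nat.one_le_iff_ne_zero.mpr ht.1
      · have : t ≤ n - 1 := by omega
        omega
    rw [Finset.sum_congr rfl herase, Finset.sum_const,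
      Finset.card_erase_of_mem h0mem, hcard 0 (by norm_num), hC0, nsmul_eq_mul]
    have h1P : 1 ≤ P := by omega
    push_cast [h1P]
    ring
  have hT1 : ∑ t ∈ (Finset.range n).filter (fun t => t % 3 = 1), autocorr n a t
      = (n:ℤ) := by
    have hall : ∀ t ∈ (Finset.range n).filter (fun t => t % 3 = 1),
        autocorr n a t = 3 := by
      intro t ht
      rw [Finset.mem_filter, Finset.mem_range] at ht
      refine hC ↑t ?_ ?_
      · exact_mod_cast Nat.one_le_iff_ne_zero.mpr (by omega)
      · have : t ≤ n - 1 := by omega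
        omega
    rw [Finset.sum_congr rfl hall, Finset.sum_const, hcard 1 (by norm_num), hn]
    push_cast
    ring
  -- key identities
  have k0 : ∑ t ∈ (Finset.range n).filter (fun t => t % 3 = 0), autocorr n a t
      = ∑ c ∈ Finset.range 3, S c * S ((c + 0) % 3) := s15_keyid n a per hd3 0 (by norm_num)
  have k1 : ∑ t ∈ (Finset.range n).filter (fun t => t % 3 = 1), autocorr n a t
      = ∑ c ∈ Finset.range 3, S c * S ((c + 1) % 3) := s15_keyid n a per hd3 1 (by norm_num)
  rw [hT0] at k0
  rw [hT1] at k1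
  have hsum3 : ∀ f : ℕ → ℤ, ∑ c ∈ Finset.range 3, f c = f 0 + f 1 + f 2 := by
    intro f
    rw [Finset.sum_range_succ, Finset.sum_range_succ, Finset.sum_range_succ,
      Finset.sum_range_zero]
    ring
  rw [hsum3] at k0 k1
  norm_num at k0 k1
  -- now k0 : 3P - 3 + n = S0*S0 + S1*S1 + S2*S2 (or reversed), k1 similar
  have hP' : (P:ℤ) = 3*(m:ℤ)^2 + 3*(m:ℤ) + 1 := by rw [hPdef]; push_cast; ring
  have hval : (S 0 - S 1)^2 + (S 0 - S 1)*(S 1 - S 2) + (S 1 - S 2)^2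
      = 9*(m:ℤ)^2 + 9*(m:ℤ) := by
    linear_combination k1 - k0 + 3*hP'
  -- transfer to ℕ
  set N : ℕ := 9*m^2 + 9*m with hNdef
  have hNval : (N:ℤ) = (S 0 - S 1)^2 + (S 0 - S 1)*(S 1 - S 2) + (S 1 - S 2)^2 := by
    rw [hval, hNdef]; push_cast; ring
  have hev := s15_evenval N _ _ hNval
  -- split the factorization between m and m+1
  have hm0 : m ≠ 0 := by omega
  have hm10 : m + 1 ≠ 0 := by omega
  have hNfac : N = 3^2 * (m * (m+1)) := by rw [hNdef]; ring
  have hsplit : ∀ q : ℕ, q.Prime → q % 3 = 2 →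
      Even (m.factorization q) ∧ Even ((m+1).factorization q) := by
    intro q hq hq2
    have hq3 : q ≠ 3 := by omega
    have hNfq : N.factorization q = m.factorization q + (m+1).factorization q := by
      rw [hNfac, Nat.factorization_mul (by norm_num) (Nat.mul_ne_zero hm0 hm10),
        Nat.factorization_mul hm0 hm10, Nat.Prime.factorization_pow Nat.prime_three]
      simp [Finsupp.single_apply, hq3, Ne.symm hq3]
    have hsum : Even (m.factorization q + (m+1).factorization q) := by
      rw [← hNfq]; exact hev q hq hq2
    have hone : m.factorization q = 0 ∨ (m+1).factorization q = 0 := by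
      by_contra hcon
      push_neg at hcon
      have hd1 : q ∣ m := Nat.dvd_of_factorization_pos hcon.1
      have hd2 : q ∣ m + 1 := Nat.dvd_of_factorization_pos hcon.2
      have hd3' := Nat.dvd_sub hd2 hd1
      have h21 : m + 1 - m = 1 := by omega
      rw [h21] at hd3'
      have : q ∣ 1 := hd3'
      have := Nat.le_of_dvd one_pos this
      have := hq.two_le
      omega
    rcases hone with h | h
    · rw [h] at hsum ⊢
      exact ⟨Even.zero, by simpa using hsum⟩
    · rw [h] at hsum ⊢
      exact ⟨by simpa using hsum, Even.zero⟩
  -- pick w ≡ 2 (mod 3) among m, m+1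
  set w : ℕ := if m % 3 = 2 then m else m + 1 with hw
  have hw2 : w % 3 = 2 := by
    rcases hm3 with h | h
    · rw [hw, if_neg (by omega)]; omega
    · rw [hw, if_pos h]; omega
  have hwpos : 0 < w := by rw [hw]; split <;> omega
  have hw3 : ¬ (3 ∣ w) := by omega
  have hwev : ∀ q : ℕ, q.Prime → q % 3 = 2 → Even (w.factorization q) := by
    intro q hq hq2
    rw [hw]
    split
    · exact (hsplit q hq hq2).1
    · exact (hsplit q hq hq2).2
  have := s15_modthree w hwpos hw3 hwev
  omega
end

section
/- For each A ∈ {61, 67, 77, 83}, there is no binary sequence of period (A²+3)/4 with all nontrivial autocorrelation values equal to 3 (i.e. there is no such sequence of period 931, 1123, 1483, or 1723). -/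
set_option maxHeartbeats 1600000

open Polynomial Finset

theorem geomZero {R : Type} [CommRing R] [IsDomain R] (x : R) (N : ℕ)
    (h1 : x ≠ 1) (hN : x ^ N = 1) : ∑ i ∈ Finset.range N, x ^ i = 0 := by
  have h := geom_sum_mul x N
  rw [hN, sub_self] at h
  rcases mul_eq_zero.mp h with h' | h'
  · exact h'
  · exact absurd (sub_eq_zero.mp h') h1

theorem cast_mk_eq (e : ℕ) (z : ℤ) :
    AdjoinRoot.mk (cyclotomic e ℤ) (C z) = ((z : ℤ) : AdjoinRoot (cyclotomic e ℤ)) := by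
  have h1 : (C z : ℤ[X]) = ((z : ℤ) : ℤ[X]) := by simp
  rw [h1, map_intCast]

theorem cast_inj_cyc (e : ℕ) (he : e.Prime) (h3 : 3 ≤ e) (z : ℤ)
    (hz : ((z : ℤ) : AdjoinRoot (cyclotomic e ℤ)) = 0) : z = 0 := by
  have hmk : AdjoinRoot.mk (cyclotomic e ℤ) (C z) = 0 := by rw [cast_mk_eq]; exact hz
  obtain ⟨q, hq⟩ := AdjoinRoot.mk_eq_zero.mp hmk
  by_contra hzne
  have hC : (C z : ℤ[X]) ≠ 0 := by rw [Ne, Polynomial.C_eq_zero]; exact hzne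
  have hle := Polynomial.natDegree_le_of_dvd ⟨q, hq⟩ hC
  rw [natDegree_cyclotomic, Nat.totient_prime he, natDegree_C] at hle
  omega

theorem cast_dvd_cyc (e : ℕ) (he : e.Prime) (h3 : 3 ≤ e) (z : ℤ)
    (hz : ((z : ℤ) : AdjoinRoot (cyclotomic e ℤ)) ∈ Ideal.span {(2 : AdjoinRoot (cyclotomic e ℤ))}) :
    (2:ℤ) ∣ z := by
  obtain ⟨y, hy⟩ := Ideal.mem_span_singleton'.mp hz
  obtain ⟨h, rfl⟩ := AdjoinRoot.mk_surjective y
  have hmk : AdjoinRoot.mk (cyclotomic e ℤ) (C z - h * C 2) = 0 := by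
    rw [map_sub, map_mul, cast_mk_eq, cast_mk_eq, ← hy]; ring
  obtain ⟨q, hq⟩ := AdjoinRoot.mk_eq_zero.mp hmk
  have hmap := congrArg (Polynomial.map (Int.castRingHom (ZMod 2))) hq
  rw [Polynomial.map_sub, Polynomial.map_mul, Polynomial.map_mul, map_cyclotomic,
    Polynomial.map_C, Polynomial.map_C] at hmap
  have h20 : ((Int.castRingHom (ZMod 2)) 2) = 0 := by decide
  rw [h20, Polynomial.C_0, mul_zero, sub_zero] at hmap
  by_contra hndvd
  have hz2 : ((Int.castRingHom (ZMod 2)) z) ≠ 0 := by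
    simpa [ZMod.intCast_zmod_eq_zero_iff_dvd] using hndvd
  have hC : (C ((Int.castRingHom (ZMod 2)) z) : (ZMod 2)[X]) ≠ 0 := by
    rw [Ne, Polynomial.C_eq_zero]; exact hz2
  have := Polynomial.natDegree_le_of_dvd ⟨_, hmap⟩ hC
  rw [natDegree_cyclotomic, Nat.totient_prime he, natDegree_C] at this
  omega

theorem reduced_cyc (e : ℕ) (he : e.Prime) (h3 : 3 ≤ e) :
    IsReduced (AdjoinRoot (cyclotomic e ℤ) ⧸
      Ideal.span {(2 : AdjoinRoot (cyclotomic e ℤ))}) := by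
  set Φ : ℤ[X] := cyclotomic e ℤ with hΦ
  have hsep : Separable (X ^ e - 1 : (ZMod 2)[X]) := by
    rw [Polynomial.X_pow_sub_one_separable_iff]
    have : ¬ (2 ∣ e) := by
      intro hd
      have := (Nat.prime_dvd_prime_iff_eq Nat.prime_two he).mp hd
      omega
    simpa [ZMod.natCast_eq_zero_iff] using this
  have hsq : Squarefree (cyclotomic e (ZMod 2)) :=
    Squarefree.squarefree_of_dvd (cyclotomic.dvd_X_pow_sub_one e _) hsep.squarefree
  constructor
  intro x hx
  obtain ⟨k, hk⟩ := hx
  obtain ⟨r, rfl⟩ := Ideal.Quotient.mk_surjective x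
  obtain ⟨f, rfl⟩ := AdjoinRoot.mk_surjective r
  rcases Nat.eq_zero_or_pos k with rfl | hk0
  · rw [pow_zero] at hk
    rw [← mul_one (Ideal.Quotient.mk _ (AdjoinRoot.mk Φ f)), hk, mul_zero]
  · have hmem : (AdjoinRoot.mk Φ f) ^ k ∈ Ideal.span {(2 : AdjoinRoot Φ)} := by
      rw [← Ideal.Quotient.eq_zero_iff_mem, map_pow]
      exact hk
    obtain ⟨y, hy⟩ := Ideal.mem_span_singleton'.mp hmem
    obtain ⟨h, rfl⟩ := AdjoinRoot.mk_surjective y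
    have hmk : AdjoinRoot.mk Φ (f ^ k - h * C 2) = 0 := by
      rw [map_sub, map_mul, map_pow]
      have h2 : AdjoinRoot.mk Φ (C 2) = (2 : AdjoinRoot Φ) := by
        have h1 : (C (2:ℤ) : ℤ[X]) = (((2:ℤ)) : ℤ[X]) := by simp
        rw [h1, map_intCast]; norm_num
      rw [h2, ← hy]; ring
    obtain ⟨q, hq⟩ := AdjoinRoot.mk_eq_zero.mp hmk
    have hmap := congrArg (Polynomial.map (Int.castRingHom (ZMod 2))) hq
    rw [Polynomial.map_sub, Polynomial.map_mul, Polynomial.map_mul, map_cyclotomic,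
      Polynomial.map_pow, Polynomial.map_C] at hmap
    have h20 : ((Int.castRingHom (ZMod 2)) 2) = 0 := by decide
    rw [h20, Polynomial.C_0, mul_zero, sub_zero] at hmap
    have hdvd : cyclotomic e (ZMod 2) ∣ (Polynomial.map (Int.castRingHom (ZMod 2)) f) := by
      rw [← hsq.dvd_pow_iff_dvd (Nat.pos_iff_ne_zero.mp hk0)]
      exact ⟨_, hmap⟩
    obtain ⟨gbar, hgbar⟩ := hdvd
    obtain ⟨g, hg⟩ := Polynomial.map_surjective (Int.castRingHom (ZMod 2))
      (fun x => ZMod.intCast_surjective x) gbar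
    have hcoeff : ∀ i, (2:ℤ) ∣ (f - Φ * g).coeff i := by
      intro i
      have hz : Polynomial.map (Int.castRingHom (ZMod 2)) (f - Φ * g) = 0 := by
        rw [Polynomial.map_sub, Polynomial.map_mul, map_cyclotomic, hg, ← hgbar, sub_self]
      have h0 := congrArg (fun p => Polynomial.coeff p i) hz
      simp only [Polynomial.coeff_map, Polynomial.coeff_zero] at h0
      exact_mod_cast (ZMod.intCast_zmod_eq_zero_iff_dvd _ 2).mp h0
    obtain ⟨h', hh'⟩ := (Polynomial.C_dvd_iff_dvd_coeff (2:ℤ) (f - Φ * g)).mpr (fun i => by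
      have := hcoeff i; exact_mod_cast this)
    have hf : f = Φ * g + C 2 * h' := by
      rw [← hh']; ring
    rw [hf, map_add, map_mul, map_mul, AdjoinRoot.mk_self, zero_mul, zero_add]
    have h2 : AdjoinRoot.mk Φ (C 2) = (2 : AdjoinRoot Φ) := by
      have h1 : (C (2:ℤ) : ℤ[X]) = (((2:ℤ)) : ℤ[X]) := by simp
      rw [h1, map_intCast]; norm_num
    rw [h2, map_mul, Ideal.Quotient.eq_zero_iff_mem.mpr (Ideal.mem_span_singleton_self _),
      zero_mul]

theorem descent {R : Type} [CommRing R] [IsDomain R] (conj : R →+* R) (C : ℕ)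
    (hz : ∀ z : ℤ, ((z : R) ∈ Ideal.span {(2:R)}) → (2:ℤ) ∣ z)
    (h2 : (2:R) ≠ 0)
    (hred : IsReduced (R ⧸ Ideal.span {(2:R)}))
    (hcompat : ∀ x : R, Ideal.Quotient.mk (Ideal.span {(2:R)}) (conj x)
      = (Ideal.Quotient.mk (Ideal.span {(2:R)}) x) ^ C) :
    ∀ a : ℕ, Odd a → ∀ (m' : ℤ), ¬ (2:ℤ) ∣ m' → ∀ β : R,
      β * conj β = 2 ^ a * (m' : R) → False := by
  intro a
  induction a using Nat.strong_induction_on with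
  | _ a ih =>
  intro hodd m' hm β heq
  set I := Ideal.span {(2:R)} with hI
  set π := Ideal.Quotient.mk I with hπ
  have hπ2 : π 2 = 0 := Ideal.Quotient.eq_zero_iff_mem.mpr (Ideal.mem_span_singleton_self _)
  have ha1 : a ≠ 0 := by rintro rfl; exact (Nat.not_odd_iff_even.mpr Even.zero) hodd
  have hβ0 : π β = 0 := by
    by_contra hne
    have h1 : π β * π (conj β) = 0 := by
      rw [← map_mul, heq, map_mul, map_pow, hπ2, zero_pow ha1, zero_mul]
    rw [hcompat β, ← pow_succ'] at h1
    exact hne (IsNilpotent.eq_zero ⟨C + 1, h1⟩)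
  obtain ⟨β₁, hβ₁⟩ : ∃ y, β = 2 * y := by
    obtain ⟨y, hy⟩ := Ideal.mem_span_singleton'.mp (Ideal.Quotient.eq_zero_iff_mem.mp hβ0)
    exact ⟨y, by rw [← hy]; ring⟩
  have hγ : conj β = 2 * conj β₁ := by
    rw [hβ₁, map_mul, map_ofNat]
  rcases Nat.lt_or_ge a 3 with hlt | hge
  · have ha : a = 1 := by
      rcases hodd with ⟨k, hk⟩; omega
    subst ha
    have h2' : 2 * (β₁ * conj β₁) = (m' : R) := by
      apply mul_left_cancel₀ h2
      have h4 : (2:R) * (2 * (β₁ * conj β₁)) = (2 * β₁) * (2 * conj β₁) := by ring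
      rw [h4, ← hβ₁, ← hγ, heq]; ring
    have hmem : ((m' : ℤ) : R) ∈ I := by
      rw [← h2']
      exact Ideal.mem_span_singleton'.mpr ⟨β₁ * conj β₁, by ring⟩
    exact hm (hz m' hmem)
  · have heq2 : β₁ * conj β₁ = 2 ^ (a - 2) * (m' : R) := by
      apply mul_left_cancel₀ (pow_ne_zero 2 h2)
      have h4 : (2:R) ^ 2 * (β₁ * conj β₁) = (2 * β₁) * (2 * conj β₁) := by ring
      rw [h4, ← hβ₁, ← hγ, heq, ← mul_assoc, ← pow_add]
      congr 2
      omega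
    have hodd2 : Odd (a - 2) := by
      rcases hodd with ⟨k, hk⟩; exact ⟨k - 1, by omega⟩
    exact ih (a - 2) (by omega) hodd2 m' hm β₁ heq2

theorem no_seq (n e c a : ℕ) (m' : ℤ) (he : e.Prime) (h3 : 3 ≤ e) (hen : e ∣ n)
    (hn : 0 < n) (hsemi : e ∣ 2 ^ c + 1) (hodda : Odd a) (hm : ¬ (2:ℤ) ∣ m')
    (hnm : (n : ℤ) - 3 = 2 ^ a * m') :
    ¬ ∃ aa : ℤ → ℤ, IsBinarySeq n aa ∧ HasConstAutocorr n aa 3 := by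
  rintro ⟨aa, ⟨hpm, hper⟩, hconst⟩
  haveI hfe : Fact e.Prime := ⟨he⟩
  set Φ : ℤ[X] := cyclotomic e ℤ with hΦdef
  haveI : IsDomain (AdjoinRoot Φ) := AdjoinRoot.isDomain_of_prime
    ((UniqueFactorizationMonoid.irreducible_iff_prime).mp (cyclotomic.irreducible he.pos))
  set ζ : AdjoinRoot Φ := AdjoinRoot.root Φ with hζdef
  have hze : ζ ^ e = 1 := by
    have h := AdjoinRoot.mk_eq_zero.mpr (cyclotomic.dvd_X_pow_sub_one e ℤ)
    rw [map_sub, map_pow, AdjoinRoot.mk_X, map_one, sub_eq_zero] at h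
    exact h
  have hz1 : ζ ≠ 1 := by
    intro h
    have hmk : AdjoinRoot.mk Φ (X - 1) = 0 := by
      rw [map_sub, AdjoinRoot.mk_X, map_one, ← hζdef, h, sub_self]
    have hdvd := AdjoinRoot.mk_eq_zero.mp hmk
    have hne : (X - 1 : ℤ[X]) ≠ 0 := by
      intro hc
      have := congrArg (fun p => Polynomial.coeff p 1) hc
      simp [Polynomial.coeff_one] at this
    have hle := Polynomial.natDegree_le_of_dvd hdvd hne
    rw [natDegree_cyclotomic, Nat.totient_prime he] at hle
    have : (X - 1 : ℤ[X]).natDegree = 1 := by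
      simpa using Polynomial.natDegree_X_sub_C (1:ℤ)
    omega
  set ζi : AdjoinRoot Φ := ζ ^ (e - 1) with hζidef
  have hmul : ζ * ζi = 1 := by
    rw [hζidef, ← pow_succ']
    have h1 : e - 1 + 1 = e := by omega
    rw [h1, hze]
  have hzi1 : ζi ≠ 1 := by
    intro h
    apply hz1
    have h1 := hmul
    rw [h, mul_one] at h1
    exact h1
  have hzie : ζi ^ e = 1 := by
    rw [hζidef, ← pow_mul, mul_comm, pow_mul, hze, one_pow]
  obtain ⟨nk, hnk⟩ := hen
  have hzin : ζi ^ n = 1 := by rw [hnk, pow_mul, hzie, one_pow]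
  have hzn : ζ ^ n = 1 := by rw [hnk, pow_mul, hze, one_pow]
  have h0 : Φ.eval₂ (Int.castRingHom (AdjoinRoot Φ)) ζi = 0 := by
    have h1 := congrArg (Polynomial.eval₂ (Int.castRingHom (AdjoinRoot Φ)) ζi)
      (cyclotomic_prime ℤ e)
    rw [Polynomial.eval₂_finset_sum] at h1
    have h2 : ∑ i ∈ range e, Polynomial.eval₂ (Int.castRingHom (AdjoinRoot Φ)) ζi ((X:ℤ[X]) ^ i)
        = ∑ i ∈ range e, ζi ^ i :=
      Finset.sum_congr rfl (fun i _ => Polynomial.eval₂_X_pow _ _)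
    rw [h2, geomZero ζi e hzi1 hzie] at h1
    exact h1
  set conj : AdjoinRoot Φ →+* AdjoinRoot Φ := AdjoinRoot.lift (Int.castRingHom _) ζi h0
    with hconjdef
  have hconjζ : conj ζ = ζi := AdjoinRoot.lift_root h0
  -- quotient mod 2
  set I : Ideal (AdjoinRoot Φ) := Ideal.span {(2 : AdjoinRoot Φ)} with hIdef
  have two_ne : (2 : AdjoinRoot Φ) ≠ 0 := by
    intro h
    have h1 : (((2:ℤ)) : AdjoinRoot Φ) = 0 := by push_cast; exact h
    have := cast_inj_cyc e he h3 2 h1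
    norm_num at this
  haveI hchar : CharP (AdjoinRoot Φ ⧸ I) 2 := by
    constructor
    intro x
    constructor
    · intro hx
      have h1 : Ideal.Quotient.mk I (((x:ℕ) : ℤ) : AdjoinRoot Φ) = 0 := by
        rw [map_intCast, Int.cast_natCast]
        exact_mod_cast hx
      have h2 := cast_dvd_cyc e he h3 x (Ideal.Quotient.eq_zero_iff_mem.mp h1)
      exact_mod_cast h2
    · rintro ⟨k, rfl⟩
      have h1 : (((2*k : ℕ) : ℤ) : AdjoinRoot Φ) ∈ I :=
        Ideal.mem_span_singleton'.mpr ⟨(k : AdjoinRoot Φ), by push_cast; ring⟩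
      have h2 : Ideal.Quotient.mk I (((2*k : ℕ) : ℤ) : AdjoinRoot Φ) = 0 :=
        Ideal.Quotient.eq_zero_iff_mem.mpr h1
      rw [map_intCast, Int.cast_natCast] at h2
      exact_mod_cast h2
  haveI : Fact (Nat.Prime 2) := ⟨Nat.prime_two⟩
  -- compatibility of conj with Frobenius mod 2
  have hcompat : ∀ x : AdjoinRoot Φ, Ideal.Quotient.mk I (conj x)
      = (Ideal.Quotient.mk I x) ^ (2 ^ c) := by
    have hu1 : Ideal.Quotient.mk I ζ * Ideal.Quotient.mk I ζi = 1 := by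
      rw [← map_mul, hmul, map_one]
    set w : (AdjoinRoot Φ ⧸ I)ˣ :=
      ⟨Ideal.Quotient.mk I ζ, Ideal.Quotient.mk I ζi, hu1, by rwa [mul_comm] at hu1⟩ with hwdef
    have hwval : (w : AdjoinRoot Φ ⧸ I) = Ideal.Quotient.mk I ζ := rfl
    have hwe : w ^ e = 1 := by
      apply Units.ext
      rw [Units.val_pow_eq_pow_val, Units.val_one, hwval, ← map_pow, hze, map_one]
    obtain ⟨k, hk⟩ := hsemi
    have hwkey : w ^ (2 ^ c) = w ^ (e - 1) := by
      have h1 : w ^ (2 ^ c) * w = 1 := by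
        rw [← pow_succ, hk, pow_mul, hwe, one_pow]
      have h2 : w ^ (e - 1) * w = 1 := by
        rw [← pow_succ]
        have h3' : e - 1 + 1 = e := by omega
        rw [h3', hwe]
      exact mul_right_cancel (h1.trans h2.symm)
    have hext : ((iterateFrobenius (AdjoinRoot Φ ⧸ I) 2 c).comp
          (Ideal.Quotient.mk I)).toIntAlgHom
        = ((Ideal.Quotient.mk I).comp conj).toIntAlgHom := by
      apply AdjoinRoot.algHom_ext
      show iterateFrobenius _ 2 c (Ideal.Quotient.mk I (AdjoinRoot.root Φ))
        = Ideal.Quotient.mk I (conj (AdjoinRoot.root Φ))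
      rw [← hζdef, hconjζ, iterateFrobenius_def]
      have hv : (Ideal.Quotient.mk I ζ) ^ (2 ^ c) = ((w ^ (2^c) : (AdjoinRoot Φ ⧸ I)ˣ)
          : AdjoinRoot Φ ⧸ I) := by
        rw [Units.val_pow_eq_pow_val, hwval]
      rw [hv, hwkey, Units.val_pow_eq_pow_val, hwval, ← map_pow, ← hζidef]
    intro x
    have h4 := AlgHom.congr_fun hext x
    simp only [AlgHom.coe_mk, RingHom.toIntAlgHom, RingHom.coe_comp, Function.comp_apply,
      iterateFrobenius_def] at h4
    exact h4.symm
  -- the unit ζ and the sequence sums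
  set u : (AdjoinRoot Φ)ˣ := ⟨ζ, ζi, hmul, by rwa [mul_comm] at hmul⟩ with hudef
  have huval : ((u : (AdjoinRoot Φ)ˣ) : AdjoinRoot Φ) = ζ := rfl
  have huinv : ((u⁻¹ : (AdjoinRoot Φ)ˣ) : AdjoinRoot Φ) = ζi := rfl
  have hyn : ∀ y : (AdjoinRoot Φ)ˣ, (y : AdjoinRoot Φ) ^ n = 1 → y ^ (n:ℤ) = 1 := by
    intro y hy
    apply Units.ext
    rw [zpow_natCast, Units.val_pow_eq_pow_val, hy, Units.val_one]
  have hun : u ^ (n:ℤ) = 1 := hyn u (by rw [huval]; exact hzn)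
  have huin : (u⁻¹) ^ (n:ℤ) = 1 := hyn u⁻¹ (by rw [huinv]; exact hzin)
  set G : ℤ → AdjoinRoot Φ :=
    fun s => (aa s : AdjoinRoot Φ) * ((u⁻¹ ^ s : (AdjoinRoot Φ)ˣ) : AdjoinRoot Φ) with hGdef
  have hGper : ∀ s : ℤ, G (s + n) = G s := by
    intro s
    rw [hGdef]
    simp only
    rw [hper s, zpow_add, huin, mul_one]
  have step : ∀ j : ℤ, ∑ t ∈ range n, G (j + 1 + t) = ∑ t ∈ range n, G (j + t) := by
    intro j
    have hc : ∀ t : ℕ, j + 1 + (t:ℤ) = j + ((t+1 : ℕ) : ℤ) := by intro t; push_cast; ring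
    have h1 : ∑ t ∈ range n, G (j + 1 + t) = ∑ t ∈ range n, G (j + ((t+1 : ℕ) : ℤ)) :=
      Finset.sum_congr rfl (fun t _ => by rw [hc t])
    have h2 := Finset.sum_range_succ' (fun t : ℕ => G (j + t)) n
    have h3 := Finset.sum_range_succ (fun t : ℕ => G (j + t)) n
    have h4 : G (j + (n:ℤ)) = G j := hGper j
    have h5 : ∑ t ∈ range n, G (j + ((t+1:ℕ):ℤ)) + G (j + ((0:ℕ):ℤ))
        = ∑ t ∈ range n, G (j + t) + G (j + (n:ℤ)) := by
      rw [← h2, ← h3]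
    rw [h1]
    have h6 : G (j + ((0:ℕ):ℤ)) = G j := by norm_num
    rw [h6, h4] at h5
    exact add_right_cancel h5
  have shift : ∀ k : ℤ, ∑ t ∈ range n, G (k + t) = ∑ t ∈ range n, G t := by
    intro k
    induction k using Int.induction_on with
    | zero => simp
    | succ k ih =>
      calc ∑ t ∈ range n, G ((k:ℤ) + 1 + t) = ∑ t ∈ range n, G ((k:ℤ) + t) := step k
        _ = ∑ t ∈ range n, G t := ih
    | pred k ih =>
      have h1 := step (-(k:ℤ) - 1)
      have h2 : ∀ t : ℕ, -(k:ℤ) - 1 + 1 + (t:ℤ) = -(k:ℤ) + t := by intro t; ring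
      have h3 : ∑ t ∈ range n, G (-(k:ℤ) - 1 + 1 + t) = ∑ t ∈ range n, G (-(k:ℤ) + t) :=
        Finset.sum_congr rfl (fun t _ => by rw [h2 t])
      rw [h3] at h1
      calc ∑ t ∈ range n, G (-(k:ℤ) - 1 + t) = ∑ t ∈ range n, G (-(k:ℤ) + t) := h1.symm
        _ = ∑ t ∈ range n, G t := ih
  set β : AdjoinRoot Φ := ∑ i ∈ range n, (aa i : AdjoinRoot Φ) * ζ ^ i with hβdef
  set γ : AdjoinRoot Φ := ∑ i ∈ range n, (aa i : AdjoinRoot Φ) * ζi ^ i with hγdef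
  have hγG : γ = ∑ t ∈ range n, G t := by
    rw [hγdef]
    apply Finset.sum_congr rfl
    intro t _
    have hv : ((u⁻¹ ^ (t:ℤ) : (AdjoinRoot Φ)ˣ) : AdjoinRoot Φ) = ζi ^ t := by
      rw [zpow_natCast, Units.val_pow_eq_pow_val, huinv]
    rw [hGdef]
    simp only
    rw [hv]
  have hconjβ : conj β = γ := by
    rw [hβdef, hγdef, map_sum]
    apply Finset.sum_congr rfl
    intro i _
    rw [map_mul, map_pow, map_intCast, hconjζ]
  -- the autocorrelation identity
  have hprod : ∑ t ∈ range n, ((autocorr n aa t : ℤ) : AdjoinRoot Φ)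
      * ((u⁻¹ ^ (t:ℤ) : (AdjoinRoot Φ)ˣ) : AdjoinRoot Φ) = β * γ := by
    have e1 : ∀ t : ℕ, ((autocorr n aa t : ℤ) : AdjoinRoot Φ)
        * ((u⁻¹ ^ (t:ℤ) : (AdjoinRoot Φ)ˣ) : AdjoinRoot Φ)
        = ∑ i ∈ range n, ((aa i : AdjoinRoot Φ) * ((u ^ (i:ℤ) : (AdjoinRoot Φ)ˣ) : AdjoinRoot Φ))
          * G ((i:ℤ) + t) := by
      intro t
      rw [autocorr]
      push_cast
      rw [Finset.sum_mul]
      apply Finset.sum_congr rfl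
      intro i _
      rw [hGdef]
      simp only
      have hu5 : ((u ^ (i:ℤ) : (AdjoinRoot Φ)ˣ) : AdjoinRoot Φ)
          * ((u⁻¹ ^ ((i:ℤ) + t) : (AdjoinRoot Φ)ˣ) : AdjoinRoot Φ)
          = ((u⁻¹ ^ (t:ℤ) : (AdjoinRoot Φ)ˣ) : AdjoinRoot Φ) := by
        rw [← Units.val_mul]
        congr 1
        rw [zpow_add, ← mul_assoc, inv_zpow, mul_inv_cancel, one_mul]
      calc (aa i : AdjoinRoot Φ) * (aa ((i:ℤ) + t) : AdjoinRoot Φ)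
            * ((u⁻¹ ^ (t:ℤ) : (AdjoinRoot Φ)ˣ) : AdjoinRoot Φ)
          = (aa i : AdjoinRoot Φ) * (aa ((i:ℤ) + t) : AdjoinRoot Φ)
            * (((u ^ (i:ℤ) : (AdjoinRoot Φ)ˣ) : AdjoinRoot Φ)
              * ((u⁻¹ ^ ((i:ℤ) + t) : (AdjoinRoot Φ)ˣ) : AdjoinRoot Φ)) := by rw [hu5]
        _ = ((aa i : AdjoinRoot Φ) * ((u ^ (i:ℤ) : (AdjoinRoot Φ)ˣ) : AdjoinRoot Φ))
            * ((aa ((i:ℤ) + t) : AdjoinRoot Φ)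
              * ((u⁻¹ ^ ((i:ℤ) + t) : (AdjoinRoot Φ)ˣ) : AdjoinRoot Φ)) := by ring
    calc ∑ t ∈ range n, ((autocorr n aa t : ℤ) : AdjoinRoot Φ)
        * ((u⁻¹ ^ (t:ℤ) : (AdjoinRoot Φ)ˣ) : AdjoinRoot Φ)
        = ∑ t ∈ range n, ∑ i ∈ range n,
          ((aa i : AdjoinRoot Φ) * ((u ^ (i:ℤ) : (AdjoinRoot Φ)ˣ) : AdjoinRoot Φ))
            * G ((i:ℤ) + t) := Finset.sum_congr rfl (fun t _ => e1 t)
      _ = ∑ i ∈ range n, ∑ t ∈ range n,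
          ((aa i : AdjoinRoot Φ) * ((u ^ (i:ℤ) : (AdjoinRoot Φ)ˣ) : AdjoinRoot Φ))
            * G ((i:ℤ) + t) := Finset.sum_comm
      _ = ∑ i ∈ range n, ((aa i : AdjoinRoot Φ) * ((u ^ (i:ℤ) : (AdjoinRoot Φ)ˣ) : AdjoinRoot Φ))
            * ∑ t ∈ range n, G ((i:ℤ) + t) := by
          exact Finset.sum_congr rfl (fun i _ => (Finset.mul_sum _ _ _).symm)
      _ = ∑ i ∈ range n, ((aa i : AdjoinRoot Φ) * ((u ^ (i:ℤ) : (AdjoinRoot Φ)ˣ) : AdjoinRoot Φ))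
            * γ := by
          refine Finset.sum_congr rfl (fun i _ => ?_)
          rw [shift (i:ℤ), ← hγG]
      _ = (∑ i ∈ range n, (aa i : AdjoinRoot Φ)
            * ((u ^ (i:ℤ) : (AdjoinRoot Φ)ˣ) : AdjoinRoot Φ)) * γ := by rw [Finset.sum_mul]
      _ = β * γ := by
          have hv : (∑ i ∈ range n, (aa i : AdjoinRoot Φ)
              * ((u ^ (i:ℤ) : (AdjoinRoot Φ)ˣ) : AdjoinRoot Φ)) = β := by
            rw [hβdef]
            refine Finset.sum_congr rfl (fun i _ => ?_)
            have hv2 : ((u ^ (i:ℤ) : (AdjoinRoot Φ)ˣ) : AdjoinRoot Φ) = ζ ^ i := by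
              rw [zpow_natCast, Units.val_pow_eq_pow_val, huval]
            rw [hv2]
          rw [hv]
  -- evaluating the autocorrelation sum
  have hC0 : autocorr n aa 0 = (n : ℤ) := by
    rw [autocorr]
    have h1 : ∀ i ∈ range n, aa i * aa ((i:ℤ) + 0) = 1 := by
      intro i _
      rw [add_zero]
      rcases hpm i with h | h <;> rw [h] <;> norm_num
    rw [Finset.sum_congr rfl h1]
    simp
  have hgeo : ∑ t ∈ range n, ((u⁻¹ ^ (t:ℤ) : (AdjoinRoot Φ)ˣ) : AdjoinRoot Φ) = 0 := by
    have h1 : ∀ t ∈ range n, ((u⁻¹ ^ (t:ℤ) : (AdjoinRoot Φ)ˣ) : AdjoinRoot Φ) = ζi ^ t := by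
      intro t _
      rw [zpow_natCast, Units.val_pow_eq_pow_val, huinv]
    rw [Finset.sum_congr rfl h1]
    exact geomZero ζi n hzi1 hzin
  have hval : ∑ t ∈ range n, ((autocorr n aa t : ℤ) : AdjoinRoot Φ)
      * ((u⁻¹ ^ (t:ℤ) : (AdjoinRoot Φ)ˣ) : AdjoinRoot Φ)
      = (((n : ℤ) - 3 : ℤ) : AdjoinRoot Φ) := by
    rw [Finset.range_eq_Ico, Finset.sum_eq_sum_Ico_succ_bot hn]
    have ht0 : ((autocorr n aa ((0:ℕ):ℤ) : ℤ) : AdjoinRoot Φ)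
        * ((u⁻¹ ^ (((0:ℕ)):ℤ) : (AdjoinRoot Φ)ˣ) : AdjoinRoot Φ) = ((n:ℤ) : AdjoinRoot Φ) := by
      have : autocorr n aa ((0:ℕ):ℤ) = (n:ℤ) := by exact_mod_cast hC0
      rw [this]
      simp
    rw [ht0]
    have hCt : ∀ t ∈ Finset.Ico 1 n, ((autocorr n aa t : ℤ) : AdjoinRoot Φ)
        * ((u⁻¹ ^ (t:ℤ) : (AdjoinRoot Φ)ˣ) : AdjoinRoot Φ)
        = 3 * ((u⁻¹ ^ (t:ℤ) : (AdjoinRoot Φ)ˣ) : AdjoinRoot Φ) := by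
      intro t ht
      obtain ⟨ht1, ht2⟩ := Finset.mem_Ico.mp ht
      have h1 : autocorr n aa t = 3 := hconst t (by exact_mod_cast ht1) (by omega)
      rw [h1]
      norm_num
    rw [Finset.sum_congr rfl hCt, ← Finset.mul_sum]
    have h2 : ∑ t ∈ Finset.Ico 1 n, ((u⁻¹ ^ (t:ℤ) : (AdjoinRoot Φ)ˣ) : AdjoinRoot Φ) = -1 := by
      have hsplit := hgeo
      rw [Finset.range_eq_Ico, Finset.sum_eq_sum_Ico_succ_bot hn] at hsplit
      norm_num at hsplit
      exact eq_neg_of_add_eq_zero_right hsplit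
    rw [h2]
    push_cast
    ring
  -- conclude
  have hfinal : β * conj β = 2 ^ a * (m' : AdjoinRoot Φ) := by
    rw [hconjβ, ← hprod, hval, hnm]
    push_cast
    ring
  exact descent conj (2 ^ c) (cast_dvd_cyc e he h3) two_ne (reduced_cyc e he h3) hcompat
    a hodda m' hm β hfinal


theorem stmt17 (A : ℕ) (hA : A = 61 ∨ A = 67 ∨ A = 77 ∨ A = 83) :
    ¬ ∃ a : ℤ → ℤ, IsBinarySeq ((A ^ 2 + 3) / 4) a ∧
        HasConstAutocorr ((A ^ 2 + 3) / 4) a 3 := by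
  rcases hA with rfl | rfl | rfl | rfl
  · have h : (61 ^ 2 + 3) / 4 = 931 := by norm_num
    rw [h]
    exact no_seq 931 19 9 5 29 (by norm_num) (by norm_num) (by norm_num) (by norm_num)
      (by norm_num) (by decide) (by decide) (by norm_num)
  · have h : (67 ^ 2 + 3) / 4 = 1123 := by norm_num
    rw [h]
    exact no_seq 1123 1123 561 5 35 (by norm_num) (by norm_num) (by norm_num) (by norm_num)
      (by rw [show 561 = 187 * 3 from rfl, pow_mul]; decide) (by decide) (by decide) (by norm_num)
  · have h : (77 ^ 2 + 3) / 4 = 1483 := by norm_num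
    rw [h]
    exact no_seq 1483 1483 741 3 185 (by norm_num) (by norm_num) (by norm_num) (by norm_num)
      (by rw [show 741 = 247 * 3 from rfl, pow_mul]; decide) (by decide) (by decide) (by norm_num)
  · have h : (83 ^ 2 + 3) / 4 = 1723 := by norm_num
    rw [h]
    exact no_seq 1723 1723 287 3 215 (by norm_num) (by norm_num) (by norm_num) (by norm_num)
      (by decide) (by decide) (by decide) (by norm_num)
end
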